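/- arXiv:math/0605292 — 4 statements merged into one kernel-verified Lean document; each statement's English description precedes it below -/
import Mathlib

section
/- Let L > 0, r ≥ 1 an integer, 0 < a ≤ 1, f(t) = (L/2)·1_{[0,2/L]}(t), and g(t) = (aL/2)·1_{[0,1/(Lr)]}(t) - (aL/2)·1_{(1/(Lr),2/(Lr)]}(t). Then the squared Hellinger distance h²(f, f+g) = (1/2)∫(√f - √(f+g))² satisfies h²(f, f+g) = 1/r - (√(1+a) + √(1-a))/(2r) ≤ a²/(2r). -/
open MeasureTheory

set_option maxHeartbeats 1000000 in
theorem hellinger_computation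
    (L a : ℝ) (r : ℕ) (hL : 0 < L) (hr : 1 ≤ r) (ha0 : 0 < a) (ha1 : a ≤ 1)
    (f g : ℝ → ℝ)
    (hf : ∀ t, f t = (L / 2) * Set.indicator (Set.Icc 0 (2 / L)) (fun _ => (1 : ℝ)) t)
    (hg : ∀ t, g t = (a * L / 2) * Set.indicator (Set.Icc 0 (1 / (L * r))) (fun _ => (1 : ℝ)) t
        - (a * L / 2) * Set.indicator (Set.Ioc (1 / (L * r)) (2 / (L * r))) (fun _ => (1 : ℝ)) t) :
    (1 / 2) * (∫ t, (Real.sqrt (f t) - Real.sqrt (f t + g t)) ^ 2)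
        = 1 / r - (Real.sqrt (1 + a) + Real.sqrt (1 - a)) / (2 * r) ∧
    (1 / 2) * (∫ t, (Real.sqrt (f t) - Real.sqrt (f t + g t)) ^ 2) ≤ a ^ 2 / (2 * r) := by
  have hrR : (1:ℝ) ≤ (r:ℝ) := by exact_mod_cast hr
  have hrpos : (0:ℝ) < r := lt_of_lt_of_le one_pos hrR
  have hLr : (0:ℝ) < L * r := mul_pos hL hrpos
  set c1 : ℝ := (Real.sqrt (L/2) - Real.sqrt (L/2 + a*L/2))^2 with hc1
  set c2 : ℝ := (Real.sqrt (L/2) - Real.sqrt (L/2 - a*L/2))^2 with hc2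
  set I1 : Set ℝ := Set.Icc 0 (1/(L*r)) with hI1
  set I2 : Set ℝ := Set.Ioc (1/(L*r)) (2/(L*r)) with hI2
  have hsub1 : (1:ℝ)/(L*r) ≤ 2/L := by
    rw [div_le_div_iff₀ hLr hL]; nlinarith
  have hsub2 : (2:ℝ)/(L*r) ≤ 2/L := by
    rw [div_le_div_iff₀ hLr hL]; nlinarith
  have hpt : ∀ t, (Real.sqrt (f t) - Real.sqrt (f t + g t)) ^ 2
      = Set.indicator I1 (fun _ => c1) t + Set.indicator I2 (fun _ => c2) t := by
    intro t
    by_cases h1 : t ∈ I1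
    · have h2 : t ∉ I2 := fun h => absurd h1.2 (not_le.mpr h.1)
      have hIcc : t ∈ Set.Icc (0:ℝ) (2/L) := ⟨h1.1, le_trans h1.2 hsub1⟩
      rw [hf, hg, Set.indicator_of_mem h1, Set.indicator_of_mem h1,
        Set.indicator_of_notMem h2, Set.indicator_of_notMem h2,
        Set.indicator_of_mem hIcc]
      rw [hc1]; ring_nf
    · by_cases h2 : t ∈ I2
      · have hIcc : t ∈ Set.Icc (0:ℝ) (2/L) :=
          ⟨le_of_lt (lt_of_le_of_lt (by positivity) h2.1), le_trans h2.2 hsub2⟩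
        rw [hf, hg, Set.indicator_of_mem h2, Set.indicator_of_mem h2,
          Set.indicator_of_notMem h1, Set.indicator_of_notMem h1,
          Set.indicator_of_mem hIcc]
        rw [hc2]; ring_nf
      · rw [hf, hg, Set.indicator_of_notMem h1, Set.indicator_of_notMem h1,
          Set.indicator_of_notMem h2, Set.indicator_of_notMem h2]
        ring_nf
  have hm1 : MeasurableSet I1 := measurableSet_Icc
  have hm2 : MeasurableSet I2 := measurableSet_Ioc
  have hint1 : Integrable (Set.indicator I1 (fun _ => c1)) :=
    (integrable_indicator_iff hm1).mpr ((integrableOn_const_iff).mpr (Or.inr (by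
      rw [hI1, Real.volume_Icc]; exact ENNReal.ofReal_lt_top)))
  have hint2 : Integrable (Set.indicator I2 (fun _ => c2)) :=
    (integrable_indicator_iff hm2).mpr ((integrableOn_const_iff).mpr (Or.inr (by
      rw [hI2, Real.volume_Ioc]; exact ENNReal.ofReal_lt_top)))
  have hIeq : (∫ t, (Real.sqrt (f t) - Real.sqrt (f t + g t)) ^ 2)
      = c1 * (1/(L*r)) + c2 * (1/(L*r)) := by
    rw [show (fun t => (Real.sqrt (f t) - Real.sqrt (f t + g t)) ^ 2)
        = fun t => Set.indicator I1 (fun _ => c1) t + Set.indicator I2 (fun _ => c2) t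
        from funext hpt]
    rw [integral_add hint1 hint2, integral_indicator_const _ hm1, integral_indicator_const _ hm2]
    rw [hI1, hI2, measureReal_def, measureReal_def, Real.volume_Icc, Real.volume_Ioc, sub_zero]
    rw [ENNReal.toReal_ofReal (div_nonneg zero_le_one hLr.le), ENNReal.toReal_ofReal (by
      rw [sub_nonneg, div_le_div_iff₀ hLr hLr]; nlinarith)]
    have h21 : (2:ℝ)/(L*r) - 1/(L*r) = 1/(L*r) := by ring
    rw [h21, smul_eq_mul, smul_eq_mul]; ring
  have hLhalf : (0:ℝ) ≤ L/2 := by positivity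
  have e1 : Real.sqrt (L/2 + a*L/2) = Real.sqrt (L/2) * Real.sqrt (1+a) := by
    rw [← Real.sqrt_mul hLhalf]; ring_nf
  have e2 : Real.sqrt (L/2 - a*L/2) = Real.sqrt (L/2) * Real.sqrt (1-a) := by
    rw [← Real.sqrt_mul hLhalf]; ring_nf
  have hsL : (Real.sqrt (L/2))^2 = L/2 := Real.sq_sqrt hLhalf
  set s1 := Real.sqrt (1+a) with hs1def
  set s2 := Real.sqrt (1-a) with hs2def
  have hs1 : s1^2 = 1+a := Real.sq_sqrt (by linarith)
  have hs2 : s2^2 = 1-a := Real.sq_sqrt (by linarith)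
  have hc1' : c1 = (L/2)*(1-s1)^2 := by
    rw [hc1, e1]; linear_combination (1 - s1)^2 * hsL
  have hc2' : c2 = (L/2)*(1-s2)^2 := by
    rw [hc2, e2]; linear_combination (1 - s2)^2 * hsL
  have hq : (L/2)*(1/(L*r)) = 1/(2*(r:ℝ)) := by
    field_simp
  have key : (1 / 2) * (∫ t, (Real.sqrt (f t) - Real.sqrt (f t + g t)) ^ 2)
      = 1 / r - (s1 + s2) / (2 * r) := by
    rw [hIeq, hc1', hc2',
      show (L/2)*(1-s1)^2*(1/(L*r)) + (L/2)*(1-s2)^2*(1/(L*r))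
        = (1-s1)^2*((L/2)*(1/(L*r))) + (1-s2)^2*((L/2)*(1/(L*r))) from by ring,
      hq]
    linear_combination (1/(4*(r:ℝ))) * hs1 + (1/(4*(r:ℝ))) * hs2
  refine ⟨key, ?_⟩
  rw [key]
  have hs1nn : 0 ≤ s1 := Real.sqrt_nonneg _
  have hs2nn : 0 ≤ s2 := Real.sqrt_nonneg _
  have hu : 0 ≤ s1*s2 := mul_nonneg hs1nn hs2nn
  have huu : (s1*s2)^2 = 1 - a^2 := by linear_combination s2^2 * hs1 + (1+a) * hs2
  have hule : s1*s2 ≤ 1 := by nlinarith [huu, sq_nonneg (s1*s2 - 1), sq_nonneg a]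
  have hT2 : (s1+s2)^2 = 2 + 2*(s1*s2) := by linear_combination hs1 + hs2
  have hfac : 2 + 2*(s1*s2) - (1+(s1*s2)^2)^2
      = (1-s1*s2)*((s1*s2)^3+(s1*s2)^2+3*(s1*s2)+1) := by ring
  have hpos : 0 ≤ (1-s1*s2)*((s1*s2)^3+(s1*s2)^2+3*(s1*s2)+1) :=
    mul_nonneg (by linarith) (by nlinarith [pow_nonneg hu 3, pow_nonneg hu 2, hu])
  have hsq : (1+(s1*s2)^2)^2 ≤ (s1+s2)^2 := by linarith [hT2]
  have hc0 : (0:ℝ) ≤ 1 + (s1*s2)^2 := by positivity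
  have hstep : 1 + (s1*s2)^2 ≤ s1 + s2 :=
    (pow_le_pow_iff_left₀ hc0 (add_nonneg hs1nn hs2nn) two_ne_zero).mp hsq
  have hineq : 2 - a^2 ≤ s1 + s2 := by linarith [hstep, huu]
  have heq2 : 1 / (r:ℝ) - (s1 + s2) / (2 * r) = (2 - (s1+s2)) / (2*r) := by
    field_simp
  rw [heq2]
  gcongr
  linarith
end

section
/- Let φ₁,…,φ_{M'} be an orthonormal family in L₂(ℝ^d), let X₁,…,Xₙ be i.i.d. with density p ∈ L₂(ℝ^d) satisfying ‖p‖_∞ ≤ L, and set λ̂ⱼ = (1/n)∑ᵢ φⱼ(Xᵢ), λⱼ* = ∫ φⱼ p. Let p̃ = ∑ⱼ λ̂ⱼ φⱼ and let p*_𝓛 = ∑ⱼ λⱼ* φⱼ be the orthogonal projection of p onto the span 𝓛 of the φⱼ. Then E‖p̃ - p‖²₂ ≤ min_{q ∈ 𝓛} ‖q - p‖²₂ + L·M'/n. -/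
open MeasureTheory ProbabilityTheory
open scoped ENNReal NNReal

lemma my_integrable_mul {α : Type*} [MeasurableSpace α] {μ : Measure α} {f g : α → ℝ}
    (hfm : AEStronglyMeasurable f μ) (hgm : AEStronglyMeasurable g μ)
    (hf : Integrable (fun x => f x ^ 2) μ) (hg : Integrable (fun x => g x ^ 2) μ) :
    Integrable (fun x => f x * g x) μ := by
  refine Integrable.mono' ((hf.add hg).const_mul (1/2 : ℝ)) (hfm.mul hgm) ?_
  filter_upwards with x
  simp only [Pi.add_apply]
  rw [Real.norm_eq_abs, abs_mul]
  nlinarith [sq_nonneg (|f x| - |g x|), sq_abs (f x), sq_abs (g x), abs_nonneg (f x), abs_nonneg (g x)]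

theorem linear_aggregation_oracle_inequality
    (d n M' : ℕ) (hn : 0 < n)
    {Ω : Type*} [MeasurableSpace Ω] (P : Measure Ω) [IsProbabilityMeasure P]
    (X : Fin n → Ω → EuclideanSpace ℝ (Fin d))
    (hXmeas : ∀ i, Measurable (X i))
    (hindep : iIndepFun X P)
    (p : EuclideanSpace ℝ (Fin d) → ℝ) (L : ℝ)
    (hp_nonneg : ∀ x, 0 ≤ p x) (hp_meas : Measurable p)
    (hp_int : (∫ x, p x) = 1) (hp_bdd : ∀ x, p x ≤ L)
    (hpL2 : MemLp p 2 volume)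
    (hlaw : ∀ i, Measure.map (X i) P
        = volume.withDensity (fun x => ENNReal.ofReal (p x)))
    (φ : Fin M' → EuclideanSpace ℝ (Fin d) → ℝ)
    (hφL2 : ∀ j, MemLp (φ j) 2 volume)
    (horth : ∀ j k, (∫ x, φ j x * φ k x) = if j = k then 1 else 0) :
    (∫ ω, ∫ x, ((∑ j, ((1 / (n : ℝ)) * ∑ i, φ j (X i ω)) * φ j x) - p x) ^ 2 ∂volume ∂P)
      ≤ (⨅ c : Fin M' → ℝ, ∫ x, ((∑ j, c j * φ j x) - p x) ^ 2) + L * M' / n := by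
  -- measurable representatives
  obtain ⟨ψ, hψmeas, hψae⟩ :
      ∃ ψ : Fin M' → EuclideanSpace ℝ (Fin d) → ℝ,
        (∀ j, Measurable (ψ j)) ∧ (∀ j, φ j =ᵐ[volume] ψ j) := by
    refine ⟨fun j => (hφL2 j).1.mk _, fun j => (hφL2 j).1.measurable_mk,
      fun j => (hφL2 j).1.ae_eq_mk⟩
  -- basic integrabilities over volume
  have hIntp : Integrable p volume := by
    by_contra h
    rw [integral_undef h] at hp_int
    norm_num at hp_int
  have hIntp2 : Integrable (fun x => p x ^ 2) volume :=
    (memLp_two_iff_integrable_sq hpL2.1).mp hpL2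
  have hIntφ2 : ∀ j, Integrable (fun x => φ j x ^ 2) volume := fun j =>
    (memLp_two_iff_integrable_sq (hφL2 j).1).mp (hφL2 j)
  have hIntψ2 : ∀ j, Integrable (fun x => ψ j x ^ 2) volume := fun j =>
    (hIntφ2 j).congr ((hψae j).fun_comp (fun t => t ^ 2))
  have hIntψψ : ∀ j k, Integrable (fun x => ψ j x * ψ k x) volume := fun j k =>
    my_integrable_mul (hψmeas j).aestronglyMeasurable (hψmeas k).aestronglyMeasurable
      (hIntψ2 j) (hIntψ2 k)
  have hIntψp : ∀ j, Integrable (fun x => ψ j x * p x) volume := fun j =>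
    my_integrable_mul (hψmeas j).aestronglyMeasurable hpL2.1 (hIntψ2 j) hIntp2
  have horthψ : ∀ j k, (∫ x, ψ j x * ψ k x) = if j = k then 1 else 0 := by
    intro j k
    rw [← horth j k]
    exact (integral_congr_ae (((hψae j).mul (hψae k)).symm))
  have hL0 : 0 ≤ L := le_trans (hp_nonneg 0) (hp_bdd 0)
  -- notation
  set lam : Fin M' → ℝ := fun j => ∫ x, ψ j x * p x with hlam
  set K : ℝ := (∫ x, p x ^ 2) - ∑ j, lam j ^ 2 with hK
  -- the key expansion of the squared L² distance
  have hF : ∀ c : Fin M' → ℝ,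
      (∫ x, ((∑ j, c j * ψ j x) - p x) ^ 2) = (∑ j, (c j - lam j) ^ 2) + K := by
    intro c
    have hdd : ∀ x : EuclideanSpace ℝ (Fin d),
        (∑ j, c j * ψ j x) * (∑ k, c k * ψ k x)
          = ∑ j, ∑ k, (c j * c k) * (ψ j x * ψ k x) := by
      intro x
      rw [Finset.sum_mul_sum]
      exact Finset.sum_congr rfl fun j _ => Finset.sum_congr rfl fun k _ => by ring
    have hxx : ∀ x : EuclideanSpace ℝ (Fin d),
        (∑ j, c j * ψ j x) * p x = ∑ j, c j * (ψ j x * p x) := by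
      intro x; rw [Finset.sum_mul]; exact Finset.sum_congr rfl fun j _ => by ring
    have hSSd : Integrable (fun x => ∑ j, ∑ k, (c j * c k) * (ψ j x * ψ k x)) volume :=
      integrable_finset_sum _ fun j _ =>
        integrable_finset_sum _ fun k _ => ((hIntψψ j k).const_mul (c j * c k))
    have hSS : Integrable (fun x => (∑ j, c j * ψ j x) * (∑ k, c k * ψ k x)) volume :=
      hSSd.congr (Filter.Eventually.of_forall fun x => (hdd x).symm)
    have hSpd : Integrable (fun x => ∑ j, c j * (ψ j x * p x)) volume :=
      integrable_finset_sum _ fun j _ => ((hIntψp j).const_mul (c j))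
    have hSp : Integrable (fun x => (∑ j, c j * ψ j x) * p x) volume :=
      hSpd.congr (Filter.Eventually.of_forall fun x => (hxx x).symm)
    have e1 : (∫ x, (∑ j, c j * ψ j x) * (∑ k, c k * ψ k x)) = ∑ j, c j ^ 2 := by
      simp_rw [hdd]
      rw [integral_finset_sum _ (fun j _ =>
        integrable_finset_sum _ fun k _ => ((hIntψψ j k).const_mul (c j * c k)))]
      have hj : ∀ j : Fin M', (∫ x, ∑ k, (c j * c k) * (ψ j x * ψ k x)) = c j ^ 2 := by
        intro j
        rw [integral_finset_sum _ (fun k _ => ((hIntψψ j k).const_mul (c j * c k)))]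
        simp_rw [integral_const_mul, horthψ]
        simp [Finset.sum_ite_eq, sq]
      simp_rw [hj]
    have e2 : (∫ x, (∑ j, c j * ψ j x) * p x) = ∑ j, c j * lam j := by
      simp_rw [hxx]
      rw [integral_finset_sum _ (fun j _ => ((hIntψp j).const_mul (c j)))]
      simp_rw [integral_const_mul]
      rfl
    have hiden : ∀ x : EuclideanSpace ℝ (Fin d),
        ((∑ j, c j * ψ j x) - p x) ^ 2
          = ((∑ j, c j * ψ j x) * (∑ k, c k * ψ k x)
              - 2 * ((∑ j, c j * ψ j x) * p x)) + p x ^ 2 := by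
      intro x; ring
    have hAB : Integrable (fun x => (∑ j, c j * ψ j x) * (∑ k, c k * ψ k x)
        - 2 * ((∑ j, c j * ψ j x) * p x)) volume := hSS.sub (hSp.const_mul 2)
    simp_rw [hiden]
    rw [integral_add hAB hIntp2, integral_sub hSS (hSp.const_mul 2),
      integral_const_mul, e1, e2]
    have hsum : ∑ j, (c j - lam j) ^ 2
        = ∑ j, c j ^ 2 - 2 * ∑ j, c j * lam j + ∑ j, lam j ^ 2 := by
      rw [Finset.mul_sum, ← Finset.sum_sub_distrib, ← Finset.sum_add_distrib]
      exact Finset.sum_congr rfl fun j _ => by ring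
    rw [hsum, hK]
    ring
  -- same formula with φ in place of ψ
  have hFφ : ∀ c : Fin M' → ℝ,
      (∫ x, ((∑ j, c j * φ j x) - p x) ^ 2) = (∑ j, (c j - lam j) ^ 2) + K := by
    intro c
    rw [← hF c]
    apply integral_congr_ae
    have hall : ∀ᵐ x ∂(volume : Measure (EuclideanSpace ℝ (Fin d))), ∀ j, φ j x = ψ j x :=
      ae_all_iff.mpr fun j => hψae j
    filter_upwards [hall] with x hx
    simp only [hx]
  -- the infimum equals K
  have hInf : (⨅ c : Fin M' → ℝ, ∫ x, ((∑ j, c j * φ j x) - p x) ^ 2) = K := by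
    apply le_antisymm
    · have hb : BddBelow (Set.range fun c : Fin M' → ℝ =>
          ∫ x, ((∑ j, c j * φ j x) - p x) ^ 2) := by
        refine ⟨K, ?_⟩
        rintro y ⟨c, rfl⟩
        simp only [hFφ c]
        have : (0:ℝ) ≤ ∑ j, (c j - lam j) ^ 2 :=
          Finset.sum_nonneg fun j _ => sq_nonneg _
        linarith
      have h1 := ciInf_le hb lam
      rw [hFφ lam] at h1
      simpa using h1
    · refine le_ciInf fun c => ?_
      simp only [hFφ c]
      have : (0:ℝ) ≤ ∑ j, (c j - lam j) ^ 2 :=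
        Finset.sum_nonneg fun j _ => sq_nonneg _
      linarith
  -- change of variables
  have hmapac : ∀ i, Measure.map (X i) P ≪ (volume : Measure (EuclideanSpace ℝ (Fin d))) :=
    fun i => (hlaw i) ▸ withDensity_absolutelyContinuous _ _
  have hcomp_int : ∀ (i : Fin n) (f : EuclideanSpace ℝ (Fin d) → ℝ), Measurable f →
      (∫ ω, f (X i ω) ∂P) = ∫ x, p x * f x := by
    intro i f hf
    rw [← integral_map (hXmeas i).aemeasurable hf.aestronglyMeasurable, hlaw i]
    have h0 : (fun x : EuclideanSpace ℝ (Fin d) => ENNReal.ofReal (p x))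
        = (fun x : EuclideanSpace ℝ (Fin d) => ((p x).toNNReal : ℝ≥0∞)) := rfl
    rw [h0, integral_withDensity_eq_integral_smul hp_meas.real_toNNReal f]
    congr 1
    ext x
    rw [NNReal.smul_def, smul_eq_mul, Real.coe_toNNReal _ (hp_nonneg x)]
  have hcomp_integrable : ∀ (i : Fin n) (f : EuclideanSpace ℝ (Fin d) → ℝ), Measurable f →
      Integrable (fun x => f x * p x) volume → Integrable (fun ω => f (X i ω)) P := by
    intro i f hf hfi
    have h1 : Integrable f (Measure.map (X i) P) := by
      rw [hlaw i, integrable_withDensity_iff hp_meas.ennreal_ofReal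
        (Filter.Eventually.of_forall fun x => ENNReal.ofReal_lt_top)]
      refine hfi.congr ?_
      filter_upwards with x
      rw [ENNReal.toReal_ofReal (hp_nonneg x)]
    exact (integrable_map_measure hf.aestronglyMeasurable (hXmeas i).aemeasurable).mp h1
  -- moments of ψ j (X i ·)
  have hmeanj : ∀ j (i : Fin n), (∫ ω, ψ j (X i ω) ∂P) = lam j := by
    intro j i
    rw [hcomp_int i (ψ j) (hψmeas j), hlam]
    exact integral_congr_ae (Filter.Eventually.of_forall fun x => mul_comm _ _)
  have hintj : ∀ j (i : Fin n), Integrable (fun ω => ψ j (X i ω)) P := fun j i =>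
    hcomp_integrable i (ψ j) (hψmeas j) (hIntψp j)
  have hIntψ2p : ∀ j, Integrable (fun x => ψ j x ^ 2 * p x) volume := by
    intro j
    refine Integrable.mono' ((hIntψ2 j).const_mul L)
      ((((hψmeas j).pow_const 2).mul hp_meas).aestronglyMeasurable) ?_
    filter_upwards with x
    rw [Real.norm_eq_abs, abs_of_nonneg (mul_nonneg (sq_nonneg _) (hp_nonneg x))]
    have h1 := hp_bdd x
    have h2 := sq_nonneg (ψ j x)
    nlinarith
  have hintj2 : ∀ j (i : Fin n), Integrable (fun ω => ψ j (X i ω) ^ 2) P := fun j i =>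
    hcomp_integrable i (fun x => ψ j x ^ 2) ((hψmeas j).pow_const 2) (hIntψ2p j)
  have hm2 : ∀ j (i : Fin n), (∫ ω, ψ j (X i ω) ^ 2 ∂P) ≤ L := by
    intro j i
    rw [hcomp_int i (fun x => ψ j x ^ 2) ((hψmeas j).pow_const 2)]
    have hle : (∫ x, p x * ψ j x ^ 2) ≤ ∫ x, L * ψ j x ^ 2 := by
      refine integral_mono ((hIntψ2p j).congr
        (Filter.Eventually.of_forall fun x => mul_comm _ _)) ((hIntψ2 j).const_mul L) ?_
      intro x
      simp only
      have h2 := sq_nonneg (ψ j x)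
      have h1 := hp_bdd x
      nlinarith
    have h2 : (∫ x, ψ j x ^ 2) = 1 := by
      have h := horthψ j j
      rw [if_pos rfl] at h
      simp_rw [pow_two]
      exact h
    calc (∫ x, p x * ψ j x ^ 2) ≤ ∫ x, L * ψ j x ^ 2 := hle
      _ = L * ∫ x, ψ j x ^ 2 := integral_const_mul L _
      _ = L := by rw [h2, mul_one]
  -- variance bound
  have hYsq : ∀ j (i : Fin n), Integrable (fun ω => (ψ j (X i ω) - lam j) ^ 2) P := by
    intro j i
    have h1 : Integrable (fun ω => ψ j (X i ω) ^ 2 - 2 * lam j * ψ j (X i ω)) P :=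
      (hintj2 j i).sub ((hintj j i).const_mul (2 * lam j))
    have h2 : Integrable (fun ω => (ψ j (X i ω) ^ 2 - 2 * lam j * ψ j (X i ω))
        + lam j ^ 2) P := h1.add (integrable_const _)
    exact h2.congr (Filter.Eventually.of_forall fun ω => by ring)
  have hvar : ∀ j (i : Fin n), (∫ ω, (ψ j (X i ω) - lam j) ^ 2 ∂P) ≤ L := by
    intro j i
    have hexp : ∀ ω, (ψ j (X i ω) - lam j) ^ 2
        = (ψ j (X i ω) ^ 2 - 2 * lam j * ψ j (X i ω)) + lam j ^ 2 := fun ω => by ring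
    have h1 : Integrable (fun ω => ψ j (X i ω) ^ 2 - 2 * lam j * ψ j (X i ω)) P :=
      (hintj2 j i).sub ((hintj j i).const_mul (2 * lam j))
    simp_rw [hexp]
    rw [integral_add h1 (integrable_const _),
      integral_sub (hintj2 j i) ((hintj j i).const_mul (2 * lam j)),
      integral_const_mul, hmeanj j i, integral_const]
    simp only [measure_univ, probReal_univ, ENNReal.toReal_one, smul_eq_mul, one_mul]
    have := hm2 j i
    nlinarith [sq_nonneg (lam j)]
  -- zero mean
  have hz : ∀ j (i : Fin n), (∫ ω, (ψ j (X i ω) - lam j) ∂P) = 0 := by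
    intro j i
    rw [integral_sub (hintj j i) (integrable_const _), hmeanj j i, integral_const]
    simp [measure_univ]
  -- independence: cross terms vanish
  have hcross : ∀ j, ∀ i i' : Fin n, i ≠ i' →
      (∫ ω, (ψ j (X i ω) - lam j) * (ψ j (X i' ω) - lam j) ∂P) = 0 := by
    intro j i i' hne
    have hind : IndepFun (fun ω => ψ j (X i ω) - lam j)
        (fun ω => ψ j (X i' ω) - lam j) P :=
      (hindep.indepFun hne).comp (φ := fun v => ψ j v - lam j)
        (ψ := fun v => ψ j v - lam j)
        ((hψmeas j).sub measurable_const) ((hψmeas j).sub measurable_const)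
    have hi1 : Integrable (fun ω => ψ j (X i ω) - lam j) P :=
      (hintj j i).sub (integrable_const _)
    have hi2 : Integrable (fun ω => ψ j (X i' ω) - lam j) P :=
      (hintj j i').sub (integrable_const _)
    have hmul := hind.integral_fun_mul_eq_mul_integral hi1.aestronglyMeasurable hi2.aestronglyMeasurable
    calc (∫ ω, (ψ j (X i ω) - lam j) * (ψ j (X i' ω) - lam j) ∂P)
        = (∫ ω, (ψ j (X i ω) - lam j) ∂P) * (∫ ω, (ψ j (X i' ω) - lam j) ∂P) := hmul
      _ = 0 := by rw [hz j i, hz j i']; ring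
  -- integrability of products
  have hprod_int : ∀ j (i i' : Fin n),
      Integrable (fun ω => (ψ j (X i ω) - lam j) * (ψ j (X i' ω) - lam j)) P := by
    intro j i i'
    by_cases h : i = i'
    · subst h
      exact (hYsq j i).congr (Filter.Eventually.of_forall fun ω => by simp only [pow_two])
    · have hind : IndepFun (fun ω => ψ j (X i ω) - lam j)
          (fun ω => ψ j (X i' ω) - lam j) P :=
        (hindep.indepFun h).comp (φ := fun v => ψ j v - lam j)
          (ψ := fun v => ψ j v - lam j)
          ((hψmeas j).sub measurable_const) ((hψmeas j).sub measurable_const)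
      exact hind.integrable_mul ((hintj j i).sub (integrable_const _))
        ((hintj j i').sub (integrable_const _))
  -- second moment of the sum
  have hsum_sq : ∀ j, (∫ ω, (∑ i, (ψ j (X i ω) - lam j)) ^ 2 ∂P) ≤ n * L := by
    intro j
    have hexp : ∀ ω, (∑ i, (ψ j (X i ω) - lam j)) ^ 2
        = ∑ i, ∑ i', (ψ j (X i ω) - lam j) * (ψ j (X i' ω) - lam j) := fun ω => by
      rw [pow_two, Finset.sum_mul_sum]
    simp_rw [hexp]
    rw [integral_finset_sum _ (fun i _ => integrable_finset_sum _ (fun i' _ => hprod_int j i i'))]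
    have hterm : ∀ i : Fin n,
        (∫ ω, ∑ i', (ψ j (X i ω) - lam j) * (ψ j (X i' ω) - lam j) ∂P) ≤ L := by
      intro i
      rw [integral_finset_sum _ (fun i' _ => hprod_int j i i')]
      have hite : ∀ i' : Fin n,
          (∫ ω, (ψ j (X i ω) - lam j) * (ψ j (X i' ω) - lam j) ∂P)
            = if i' = i then ∫ ω, (ψ j (X i ω) - lam j) ^ 2 ∂P else 0 := by
        intro i'
        by_cases h : i' = i
        · subst h
          rw [if_pos rfl]
          exact integral_congr_ae (Filter.Eventually.of_forall fun ω => by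
            simp only [pow_two])
        · rw [if_neg h]
          exact hcross j i i' (fun he => h he.symm)
      simp_rw [hite]
      rw [Finset.sum_ite_eq' Finset.univ i (fun _ => ∫ ω, (ψ j (X i ω) - lam j) ^ 2 ∂P)]
      simp only [Finset.mem_univ, if_pos]
      exact hvar j i
    calc (∑ i : Fin n, ∫ ω, ∑ i', (ψ j (X i ω) - lam j) * (ψ j (X i' ω) - lam j) ∂P)
        ≤ ∑ _i : Fin n, L := Finset.sum_le_sum fun i _ => hterm i
      _ = n * L := by rw [Finset.sum_const, Finset.card_univ, Fintype.card_fin, nsmul_eq_mul]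
  have hn' : (0:ℝ) < n := by exact_mod_cast hn
  -- rewriting the empirical coefficient deviation
  have hhat : ∀ j (ω : Ω), ((1 / (n:ℝ)) * ∑ i, ψ j (X i ω)) - lam j
      = (1 / (n:ℝ)) * ∑ i, (ψ j (X i ω) - lam j) := by
    intro j ω
    rw [Finset.sum_sub_distrib, Finset.sum_const, Finset.card_univ, Fintype.card_fin,
      nsmul_eq_mul]
    field_simp
  have hThat : ∀ j, (∫ ω, (((1 / (n:ℝ)) * ∑ i, ψ j (X i ω)) - lam j) ^ 2 ∂P) ≤ L / n := by
    intro j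
    have hx : ∀ ω : Ω, (((1 / (n:ℝ)) * ∑ i, ψ j (X i ω)) - lam j) ^ 2
        = (1 / (n:ℝ)) ^ 2 * (∑ i, (ψ j (X i ω) - lam j)) ^ 2 := fun ω => by
      rw [hhat j ω]; ring
    simp_rw [hx]
    rw [integral_const_mul]
    calc (1 / (n:ℝ)) ^ 2 * ∫ ω, (∑ i, (ψ j (X i ω) - lam j)) ^ 2 ∂P
        ≤ (1 / (n:ℝ)) ^ 2 * (n * L) :=
          mul_le_mul_of_nonneg_left (hsum_sq j) (by positivity)
      _ = L / n := by field_simp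
  have hTint : ∀ j, Integrable
      (fun ω => (((1 / (n:ℝ)) * ∑ i, ψ j (X i ω)) - lam j) ^ 2) P := by
    intro j
    refine ((integrable_finset_sum _ fun i (_ : i ∈ Finset.univ) =>
      integrable_finset_sum _ fun i' (_ : i' ∈ Finset.univ) =>
        hprod_int j i i').const_mul ((1 / (n:ℝ)) ^ 2)).congr ?_
    filter_upwards with ω
    rw [hhat j ω, mul_pow]
    congr 1
    rw [pow_two, Finset.sum_mul_sum]
  -- a.e. identification of φ and ψ along the sample
  have haeΩ : ∀ᵐ ω ∂P, ∀ (i : Fin n) (j : Fin M'), φ j (X i ω) = ψ j (X i ω) := by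
    rw [ae_all_iff]
    intro i
    rw [ae_all_iff]
    intro j
    have h1 : φ j =ᵐ[Measure.map (X i) P] ψ j := (hψae j).filter_mono (hmapac i).ae_le
    exact ae_eq_comp (hXmeas i).aemeasurable h1
  -- main rewriting of the LHS
  have hmain : (∫ ω, ∫ x, ((∑ j, ((1 / (n:ℝ)) * ∑ i, φ j (X i ω)) * φ j x) - p x) ^ 2
        ∂volume ∂P)
      = ∫ ω, ((∑ j, (((1 / (n:ℝ)) * ∑ i, ψ j (X i ω)) - lam j) ^ 2) + K) ∂P := by
    apply integral_congr_ae
    filter_upwards [haeΩ] with ω hω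
    rw [hFφ (fun j => (1 / (n:ℝ)) * ∑ i, φ j (X i ω))]
    congr 1
    apply Finset.sum_congr rfl
    intro j _
    simp only [hω]
  rw [hmain, integral_add (integrable_finset_sum _ fun j (_ : j ∈ Finset.univ) => hTint j)
    (integrable_const K), integral_const,
    integral_finset_sum _ (fun j (_ : j ∈ Finset.univ) => hTint j), hInf]
  simp only [measure_univ, probReal_univ, ENNReal.toReal_one, smul_eq_mul, one_mul]
  have hb : (∑ j, ∫ ω, (((1 / (n:ℝ)) * ∑ i, ψ j (X i ω)) - lam j) ^ 2 ∂P)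
      ≤ ∑ _j : Fin M', L / n := Finset.sum_le_sum fun j _ => hThat j
  have hc : (∑ _j : Fin M', L / n) = L * M' / n := by
    rw [Finset.sum_const, Finset.card_univ, Fintype.card_fin, nsmul_eq_mul]
    ring
  rw [hc] at hb
  linarith
end

section
/- Let X₁,…,Xₙ be i.i.d. with density p on ℝ^d satisfying ‖p‖_∞ ≤ L, and let φ₁,…,φ_{M'} be orthonormal in L₂(ℝ^d). Define Z_n = sup over μ in the span with ‖p_μ‖ ≠ 0 of |(1/n)∑ᵢ p_μ(Xᵢ) - E[p_μ(X₁)]| / ‖p_μ‖₂. Then E[Z_n²] ≤ L·M'/n. -/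
open MeasureTheory ProbabilityTheory
open scoped ENNReal NNReal

lemma emp_sup_lemma (M : ℕ) (s : Fin M → ℝ) :
    sSup {z : ℝ | ∃ μ : Fin M → ℝ, (∑ l, μ l ^ 2) ≠ 0 ∧
      z = |∑ l, μ l * s l| / Real.sqrt (∑ l, μ l ^ 2)}
    = Real.sqrt (∑ l, s l ^ 2) := by
  set A : Set ℝ := {z : ℝ | ∃ μ : Fin M → ℝ, (∑ l, μ l ^ 2) ≠ 0 ∧
      z = |∑ l, μ l * s l| / Real.sqrt (∑ l, μ l ^ 2)} with hA
  have hub : ∀ z ∈ A, z ≤ Real.sqrt (∑ l, s l ^ 2) := by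
    rintro z ⟨μ, hμ, rfl⟩
    have hQ0 : (0:ℝ) ≤ ∑ l, μ l ^ 2 := Finset.sum_nonneg fun l _ => sq_nonneg _
    have hQpos : (0:ℝ) < ∑ l, μ l ^ 2 := lt_of_le_of_ne hQ0 (Ne.symm hμ)
    rw [div_le_iff₀ (Real.sqrt_pos.2 hQpos)]
    have h2 : (∑ l, μ l * s l) ^ 2 ≤ (∑ l, μ l ^ 2) * (∑ l, s l ^ 2) :=
      Finset.sum_mul_sq_le_sq_mul_sq Finset.univ μ s
    calc |∑ l, μ l * s l| = Real.sqrt ((∑ l, μ l * s l) ^ 2) := (Real.sqrt_sq_eq_abs _).symm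
      _ ≤ Real.sqrt ((∑ l, μ l ^ 2) * (∑ l, s l ^ 2)) := Real.sqrt_le_sqrt h2
      _ = Real.sqrt (∑ l, s l ^ 2) * Real.sqrt (∑ l, μ l ^ 2) := by
          rw [Real.sqrt_mul hQ0, mul_comm]
  have hle : sSup A ≤ Real.sqrt (∑ l, s l ^ 2) := Real.sSup_le hub (Real.sqrt_nonneg _)
  have hbdd : BddAbove A := ⟨_, hub⟩
  rcases Nat.eq_zero_or_pos M with hM | hM
  · subst hM
    have hAe : A = ∅ := by
      ext z; simp only [hA, Set.mem_setOf_eq, Set.mem_empty_iff_false, iff_false]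
      rintro ⟨μ, hμ, -⟩
      exact hμ (by simp)
    rw [hAe, Real.sSup_empty]
    simp
  · refine le_antisymm hle ?_
    by_cases hs : (∑ l, s l ^ 2) = 0
    · rw [hs, Real.sqrt_zero]
      have hsl : ∀ l, s l = 0 := by
        intro l
        have := (Finset.sum_eq_zero_iff_of_nonneg (fun l _ => sq_nonneg (s l))).1 hs l
          (Finset.mem_univ l)
        exact pow_eq_zero_iff (two_ne_zero) |>.1 this
      have hmem : (0:ℝ) ∈ A := by
        refine ⟨Pi.single ⟨0, hM⟩ 1, ?_, ?_⟩
        · simp [Pi.single_apply]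
        · simp [hsl]
      exact le_csSup hbdd hmem
    · have hQ0 : (0:ℝ) ≤ ∑ l, s l ^ 2 := Finset.sum_nonneg fun l _ => sq_nonneg _
      have hmem : Real.sqrt (∑ l, s l ^ 2) ∈ A := by
        refine ⟨s, hs, ?_⟩
        have h1 : ∑ l, s l * s l = ∑ l, s l ^ 2 := by
          refine Finset.sum_congr rfl fun l _ => (sq (s l)) ▸ rfl
        rw [h1, abs_of_nonneg hQ0, Real.div_sqrt]
      exact le_csSup hbdd hmem


theorem empirical_process_second_moment_bound
    (d n M' : ℕ) (hn : 0 < n)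
    {Ω : Type*} [MeasurableSpace Ω] (P : Measure Ω) [IsProbabilityMeasure P]
    (X : Fin n → Ω → EuclideanSpace ℝ (Fin d))
    (hXmeas : ∀ i, Measurable (X i))
    (hindep : iIndepFun X P)
    (p : EuclideanSpace ℝ (Fin d) → ℝ) (L : ℝ)
    (hp_nonneg : ∀ x, 0 ≤ p x) (hp_meas : Measurable p)
    (hp_int : (∫ x, p x) = 1) (hp_bdd : ∀ x, p x ≤ L)
    (hlaw : ∀ i, Measure.map (X i) P
        = volume.withDensity (fun x => ENNReal.ofReal (p x)))
    (φ : Fin M' → EuclideanSpace ℝ (Fin d) → ℝ)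
    (hφL2 : ∀ j, MemLp (φ j) 2 volume)
    (horth : ∀ j k, (∫ x, φ j x * φ k x) = if j = k then 1 else 0)
    (Z : Ω → ℝ)
    (hZ : ∀ ω, Z ω = sSup {z : ℝ | ∃ μ : Fin M' → ℝ,
        (∫ x, (∑ l, μ l * φ l x) ^ 2) ≠ 0 ∧
        z = |(1 / (n : ℝ)) * (∑ i, ∑ l, μ l * φ l (X i ω))
              - ∫ x, (∑ l, μ l * φ l x) * p x|
            / Real.sqrt (∫ x, (∑ l, μ l * φ l x) ^ 2)}) :
    (∫ ω, (Z ω) ^ 2 ∂P) ≤ L * M' / n := by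
  -- basic facts
  have hL0 : 0 ≤ L := le_trans (hp_nonneg 0) (hp_bdd 0)
  have hp_integrable : Integrable p volume := by
    by_contra h
    rw [integral_undef h] at hp_int
    exact one_ne_zero hp_int.symm
  -- integrability of products of the φ's
  have hmul : ∀ j k, Integrable (fun x => φ j x * φ k x) volume := by
    intro j k
    have h12 : (1 : ℝ≥0∞) / 1 = 1 / 2 + 1 / 2 := by
      simp only [one_div, inv_one]
      exact ENNReal.inv_two_add_inv_two.symm
      
    have := ((hφL2 k).smul (hφL2 j) : MemLp ((φ j) • (φ k)) 1 volume)
    exact memLp_one_iff_integrable.1 this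
  -- integrability of φ * p
  have hφp : ∀ j, Integrable (fun x => φ j x * p x) volume := by
    intro j
    have hmaj : Integrable (fun x => ((φ j x) ^ 2 + L * p x) / 2) volume :=
      (((hφL2 j).integrable_sq.add (hp_integrable.const_mul L)).div_const 2)
    refine hmaj.mono' ((hφL2 j).1.mul hp_meas.aestronglyMeasurable) ?_
    refine Filter.Eventually.of_forall fun x => ?_
    have h1 : |φ j x * p x| ≤ (φ j x ^ 2 + p x ^ 2) / 2 := by
      rw [abs_mul, abs_of_nonneg (hp_nonneg x)]
      nlinarith [sq_nonneg (|φ j x| - p x), sq_abs (φ j x), abs_nonneg (φ j x)]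
    have h2 : p x ^ 2 ≤ L * p x := by nlinarith [hp_nonneg x, hp_bdd x]
    have hnn : 0 ≤ ((φ j x) ^ 2 + L * p x) / 2 := by
      nlinarith [sq_nonneg (φ j x), mul_nonneg hL0 (hp_nonneg x)]
    calc ‖φ j x * p x‖ = |φ j x * p x| := rfl
      _ ≤ (φ j x ^ 2 + p x ^ 2) / 2 := h1
      _ ≤ ((φ j x) ^ 2 + L * p x) / 2 := by linarith
  -- ∫ φ_j ^ 2 = 1
  have hnorm1 : ∀ j, (∫ x, (φ j x) ^ 2) = 1 := by
    intro j
    have h := horth j j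
    rw [if_pos rfl] at h
    rw [← h]
    exact integral_congr_ae (Filter.Eventually.of_forall fun x => by ring)
  -- quadratic form identity
  have hquad : ∀ μ : Fin M' → ℝ, (∫ x, (∑ l, μ l * φ l x) ^ 2) = ∑ l, μ l ^ 2 := by
    intro μ
    have hexp : ∀ x, (∑ l, μ l * φ l x) ^ 2
        = ∑ l, ∑ k, (μ l * μ k) * (φ l x * φ k x) := by
      intro x
      rw [sq, Finset.sum_mul_sum]
      refine Finset.sum_congr rfl fun l _ => Finset.sum_congr rfl fun k _ => by ring
    simp only [hexp]
    rw [integral_finset_sum _ fun l _ => integrable_finset_sum _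
      fun k _ => ((hmul l k).const_mul _)]
    have : ∀ l : Fin M', (∫ x, ∑ k, (μ l * μ k) * (φ l x * φ k x))
        = ∑ k, (μ l * μ k) * ∫ x, (φ l x * φ k x) := by
      intro l
      rw [integral_finset_sum _ fun k _ => ((hmul l k).const_mul _)]
      exact Finset.sum_congr rfl fun k _ => integral_const_mul _ _
    simp only [this, horth]
    simp [Finset.sum_ite_eq, sq]
  -- linear identity
  have hlin : ∀ μ : Fin M' → ℝ, (∫ x, (∑ l, μ l * φ l x) * p x)
      = ∑ l, μ l * ∫ x, φ l x * p x := by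
    intro μ
    have hexp : ∀ x, (∑ l, μ l * φ l x) * p x = ∑ l, μ l * (φ l x * p x) := by
      intro x; rw [Finset.sum_mul]; exact Finset.sum_congr rfl fun l _ => by ring
    simp only [hexp]
    rw [integral_finset_sum _ fun l _ => ((hφp l).const_mul _)]
    exact Finset.sum_congr rfl fun l _ => integral_const_mul _ _
  -- define m and S
  set m : Fin M' → ℝ := fun l => ∫ x, φ l x * p x with hm
  set S : Ω → Fin M' → ℝ :=
    fun ω l => (1 / (n : ℝ)) * (∑ i, φ l (X i ω)) - m l with hS
  -- numerator identity
  have hnum : ∀ (ω : Ω) (μ : Fin M' → ℝ),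
      (1 / (n : ℝ)) * (∑ i, ∑ l, μ l * φ l (X i ω)) - ∑ l, μ l * m l
        = ∑ l, μ l * S ω l := by
    intro ω μ
    have h1 : (1 / (n : ℝ)) * (∑ i, ∑ l, μ l * φ l (X i ω))
        = ∑ l, μ l * ((1 / (n : ℝ)) * ∑ i, φ l (X i ω)) := by
      rw [Finset.sum_comm, Finset.mul_sum]
      refine Finset.sum_congr rfl fun l _ => ?_
      rw [← Finset.mul_sum]
      ring
    rw [h1, ← Finset.sum_sub_distrib]
    refine Finset.sum_congr rfl fun l _ => ?_
    simp only [hS]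
    ring
  -- pointwise identification of Z
  have hZ' : ∀ ω, Z ω = Real.sqrt (∑ l, S ω l ^ 2) := by
    intro ω
    rw [hZ ω, ← emp_sup_lemma M' (S ω)]
    congr 1
    ext z
    simp only [Set.mem_setOf_eq, hquad, hlin]
    constructor <;> rintro ⟨μ, h1, h2⟩ <;>
      exact ⟨μ, h1, by rw [h2, hnum ω μ]⟩
  -- measurable versions of φ
  set ψ : Fin M' → EuclideanSpace ℝ (Fin d) → ℝ := fun l => ((hφL2 l).1.mk (φ l)) with hψ
  have hψm : ∀ l, StronglyMeasurable (ψ l) := fun l => (hφL2 l).1.stronglyMeasurable_mk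
  have hψeq : ∀ l, φ l =ᵐ[volume] ψ l := fun l => (hφL2 l).1.ae_eq_mk
  have hac : ∀ i, Measure.map (X i) P ≪ volume := by
    intro i; rw [hlaw i]; exact withDensity_absolutelyContinuous _ _
  have hcomp : ∀ l i, (fun ω => φ l (X i ω)) =ᵐ[P] fun ω => ψ l (X i ω) :=
    fun l i => ae_eq_comp' (hXmeas i).aemeasurable (hψeq l) (hac i)
  -- domination of the law by a multiple of Lebesgue measure
  have hle : volume.withDensity (fun x => ENNReal.ofReal (p x))
      ≤ (ENNReal.ofReal L) • (volume : Measure (EuclideanSpace ℝ (Fin d))) := by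
    rw [Measure.le_iff]
    intro s hs
    rw [withDensity_apply _ hs, Measure.smul_apply, smul_eq_mul]
    calc ∫⁻ x in s, ENNReal.ofReal (p x) ∂volume
        ≤ ∫⁻ _ in s, ENNReal.ofReal L ∂volume :=
          setLIntegral_mono measurable_const fun x _ => ENNReal.ofReal_le_ofReal (hp_bdd x)
      _ = ENNReal.ofReal L * volume s := setLIntegral_const _ _
  have hmemmap : ∀ l i, MemLp (ψ l) 2 (Measure.map (X i) P) := by
    intro l i
    rw [hlaw i]
    exact ((hφL2 l).ae_eq (hψeq l)).of_measure_le_smul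
      ENNReal.ofReal_ne_top hle
  have hmem : ∀ l i, MemLp (fun ω => ψ l (X i ω)) 2 P := fun l i =>
    (memLp_map_measure_iff (hψm l).aestronglyMeasurable (hXmeas i).aemeasurable).1 (hmemmap l i)
  -- change of variables
  have hCOV : ∀ (g : EuclideanSpace ℝ (Fin d) → ℝ), Measurable g → ∀ i,
      ∫ ω, g (X i ω) ∂P = ∫ x, g x * p x := by
    intro g hg i
    have h1 : ∫ ω, g (X i ω) ∂P = ∫ y, g y ∂(Measure.map (X i) P) :=
      (integral_map (hXmeas i).aemeasurable hg.aestronglyMeasurable).symm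
    rw [h1, hlaw i]
    have h2 : (fun x => ENNReal.ofReal (p x))
        = fun x => (((p x).toNNReal : ℝ≥0) : ℝ≥0∞) := rfl
    rw [h2, integral_withDensity_eq_integral_smul
      (f := fun x => (p x).toNNReal) (measurable_real_toNNReal.comp hp_meas) g]
    refine integral_congr_ae (Filter.Eventually.of_forall fun x => ?_)
    simp only [Function.comp, NNReal.smul_def, smul_eq_mul,
      Real.coe_toNNReal _ (hp_nonneg x)]
    ring
  -- centered variables
  set W : Fin M' → Fin n → Ω → ℝ := fun l i ω => ψ l (X i ω) - m l with hWdef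
  have hWmem : ∀ l i, MemLp (W l i) 2 P := fun l i =>
    ((hmem l i).sub (memLp_const (m l)) : MemLp _ 2 P)
  have hWint : ∀ l i, Integrable (W l i) P := fun l i => (hWmem l i).integrable one_le_two
  have hmean : ∀ l i, ∫ ω, ψ l (X i ω) ∂P = m l := by
    intro l i
    rw [hCOV (ψ l) (hψm l).measurable i]
    exact integral_congr_ae ((hψeq l).symm.mul Filter.EventuallyEq.rfl)
  have hWmean : ∀ l i, ∫ ω, W l i ω ∂P = 0 := by
    intro l i
    simp only [hWdef]
    rw [integral_sub ((hmem l i).integrable one_le_two) (integrable_const _),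
      hmean l i, integral_const]
    simp
  -- second moments
  have hsq_le : ∀ l i, ∫ ω, (ψ l (X i ω)) ^ 2 ∂P ≤ L := by
    intro l i
    have hCOV2 : ∫ ω, (ψ l (X i ω)) ^ 2 ∂P = ∫ x, (ψ l x) ^ 2 * p x := by
      simpa using hCOV (fun x => (ψ l x) ^ 2) ((hψm l).measurable.pow_const 2) i
    rw [hCOV2]
    have heq : (fun x => (ψ l x) ^ 2 * p x) =ᵐ[volume] fun x => (φ l x) ^ 2 * p x := by
      filter_upwards [hψeq l] with x hx; rw [hx]
    rw [integral_congr_ae heq]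
    have hasm : AEStronglyMeasurable (fun x => (φ l x) ^ 2 * p x) volume := by
      have he : (fun x => (φ l x) ^ 2 * p x) = fun x => (φ l x * φ l x) * p x := by
        funext x; ring
      rw [he]
      exact ((hφL2 l).1.mul (hφL2 l).1).mul hp_meas.aestronglyMeasurable
    have hint1 : Integrable (fun x => (φ l x) ^ 2 * p x) volume := by
      refine ((hφL2 l).integrable_sq.const_mul L).mono' hasm ?_
      refine Filter.Eventually.of_forall fun x => ?_
      have h1 : 0 ≤ (φ l x) ^ 2 * p x := mul_nonneg (sq_nonneg _) (hp_nonneg x)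
      rw [Real.norm_of_nonneg h1]
      calc (φ l x) ^ 2 * p x ≤ (φ l x) ^ 2 * L :=
            mul_le_mul_of_nonneg_left (hp_bdd x) (sq_nonneg _)
        _ = L * (φ l x) ^ 2 := by ring
    calc (∫ x, (φ l x) ^ 2 * p x)
        ≤ ∫ x, L * (φ l x) ^ 2 :=
          integral_mono hint1 ((hφL2 l).integrable_sq.const_mul L) (fun x => by
            have := mul_le_mul_of_nonneg_left (hp_bdd x) (sq_nonneg (φ l x))
            simpa [mul_comm] using this)
      _ = L := by rw [integral_const_mul, hnorm1 l, mul_one]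
  have hWsq : ∀ l i, ∫ ω, (W l i ω) ^ 2 ∂P ≤ L := by
    intro l i
    have hexp : ∀ ω, (W l i ω) ^ 2
        = (ψ l (X i ω)) ^ 2 - (2 * m l) * ψ l (X i ω) + (m l) ^ 2 := by
      intro ω; simp only [hWdef]; ring
    simp only [hexp]
    have hi1 : Integrable (fun ω => (ψ l (X i ω)) ^ 2) P := (hmem l i).integrable_sq
    have hi2 : Integrable (fun ω => (2 * m l) * ψ l (X i ω)) P :=
      ((hmem l i).integrable one_le_two).const_mul _
    have hi3 : Integrable (fun ω => ψ l (X i ω) ^ 2 - 2 * m l * ψ l (X i ω)) P :=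
      hi1.sub hi2
    rw [integral_add hi3 (integrable_const _),
      integral_sub hi1 hi2, integral_const_mul, hmean l i, integral_const]
    have h1 := hsq_le l i
    have h2 : (0:ℝ) ≤ (m l) ^ 2 := sq_nonneg _
    simp only [measure_univ, ENNReal.toReal_one, probReal_univ, smul_eq_mul, one_mul]
    nlinarith
  -- independence of the centered variables
  have hWindep : ∀ l i k, i ≠ k → IndepFun (W l i) (W l k) P := by
    intro l i k hik
    have h1 : IndepFun (X i) (X k) P := hindep.indepFun hik
    exact h1.comp ((hψm l).measurable.sub measurable_const)
      ((hψm l).measurable.sub measurable_const)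
  have hcross : ∀ l i k, i ≠ k → ∫ ω, W l i ω * W l k ω ∂P = 0 := by
    intro l i k hik
    have h := (hWindep l i k hik).integral_mul_eq_mul_integral (hWint l i).1 (hWint l k).1
    have h2 : ∫ ω, W l i ω * W l k ω ∂P = ∫ ω, (W l i * W l k) ω ∂P := rfl
    rw [h2, h, hWmean l i, hWmean l k, mul_zero]
  have hWWint : ∀ l i k, Integrable (fun ω => W l i ω * W l k ω) P := by
    intro l i k
    rcases eq_or_ne i k with rfl | hik
    · exact (hWmem l i).integrable_sq.congr
        (Filter.Eventually.of_forall fun ω => by ring)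
    · exact ((hWindep l i k hik).integrable_mul (hWint l i) (hWint l k) :
        Integrable (W l i * W l k) P)
  -- S is a.e. equal to the ψ-version
  have hST : ∀ l, (fun ω => S ω l) =ᵐ[P]
      fun ω => (1 / (n : ℝ)) * ∑ i, W l i ω := by
    intro l
    have hall : ∀ᵐ ω ∂P, ∀ i, φ l (X i ω) = ψ l (X i ω) :=
      (MeasureTheory.ae_all_iff).2 fun i => hcomp l i
    filter_upwards [hall] with ω hω
    simp only [hS, hWdef]
    rw [Finset.sum_sub_distrib, Finset.sum_const, Finset.card_univ, Fintype.card_fin, nsmul_eq_mul]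
    have hsum : ∑ i, φ l (X i ω) = ∑ i, ψ l (X i ω) :=
      Finset.sum_congr rfl fun i _ => hω i
    rw [hsum]
    have hn' : (n : ℝ) ≠ 0 := Nat.cast_ne_zero.2 hn.ne'
    field_simp
  -- the key per-coordinate bound
  have key : ∀ l : Fin M', (∫ ω, (S ω l) ^ 2 ∂P) ≤ L / n := by
    intro l
    have hTsq : ∫ ω, ((1 / (n : ℝ)) * ∑ i, W l i ω) ^ 2 ∂P ≤ L / n := by
      have hexp : ∀ ω, ((1 / (n : ℝ)) * ∑ i, W l i ω) ^ 2
          = (1 / (n : ℝ)) ^ 2 * ∑ i, ∑ k, W l i ω * W l k ω := by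
        intro ω
        rw [mul_pow, sq (∑ i, W l i ω), Finset.sum_mul_sum]
      simp only [hexp]
      rw [integral_const_mul, integral_finset_sum _
        (fun i _ => integrable_finset_sum _ fun k _ => hWWint l i k)]
      have hsum : ∀ i, ∫ ω, ∑ k, W l i ω * W l k ω ∂P
          = ∑ k, ∫ ω, W l i ω * W l k ω ∂P :=
        fun i => integral_finset_sum _ fun k _ => hWWint l i k
      simp only [hsum]
      have hdiag : ∀ i : Fin n, (∑ k, ∫ ω, W l i ω * W l k ω ∂P) ≤ L := by
        intro i
        have h1 : (∑ k, ∫ ω, W l i ω * W l k ω ∂P) = ∫ ω, W l i ω * W l i ω ∂P := by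
          refine Finset.sum_eq_single i (fun k _ hk => hcross l i k (fun h => hk h.symm)) ?_
          intro h; exact absurd (Finset.mem_univ i) h
        rw [h1]
        have h2 : ∫ ω, W l i ω * W l i ω ∂P = ∫ ω, (W l i ω) ^ 2 ∂P :=
          integral_congr_ae (Filter.Eventually.of_forall fun ω => by ring)
        rw [h2]; exact hWsq l i
      have hn' : (0:ℝ) < n := Nat.cast_pos.2 hn
      calc (1 / (n : ℝ)) ^ 2 * ∑ i : Fin n, (∑ k, ∫ ω, W l i ω * W l k ω ∂P)
          ≤ (1 / (n : ℝ)) ^ 2 * (n * L) := by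
            refine mul_le_mul_of_nonneg_left ?_ (sq_nonneg _)
            calc (∑ i : Fin n, (∑ k, ∫ ω, W l i ω * W l k ω ∂P))
                ≤ ∑ _i : Fin n, L := Finset.sum_le_sum fun i _ => hdiag i
              _ = n * L := by rw [Finset.sum_const, Finset.card_univ, Fintype.card_fin,
                    nsmul_eq_mul]
        _ = L / n := by field_simp
    calc (∫ ω, (S ω l) ^ 2 ∂P)
        = ∫ ω, ((1 / (n : ℝ)) * ∑ i, W l i ω) ^ 2 ∂P :=
          integral_congr_ae ((hST l).mono fun ω h => by dsimp only at h ⊢; rw [h])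
      _ ≤ L / n := hTsq
  -- integrability of the coordinates of S squared
  have hSint : ∀ l, Integrable (fun ω => (S ω l) ^ 2) P := by
    intro l
    have hTmem : MemLp (fun ω => (1 / (n : ℝ)) * ∑ i, W l i ω) 2 P := by
      have h1 : MemLp (fun ω => ∑ i, W l i ω) 2 P := by
        exact memLp_finset_sum (μ := P) (p := 2) Finset.univ
          (f := fun i => W l i) (fun i _ => hWmem l i)
      exact h1.const_mul _
    have hsq : (fun ω => (S ω l) ^ 2) =ᵐ[P]
        fun ω => ((1 / (n : ℝ)) * ∑ i, W l i ω) ^ 2 :=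
      (hST l).mono fun ω h => by dsimp only at h ⊢; rw [h]
    exact hTmem.integrable_sq.congr hsq.symm
  -- conclusion
  have hZsq : (fun ω => Z ω ^ 2) = fun ω => ∑ l, (S ω l) ^ 2 := by
    funext ω
    rw [hZ' ω, Real.sq_sqrt (Finset.sum_nonneg fun l _ => sq_nonneg _)]
  rw [hZsq, integral_finset_sum _ fun l _ => hSint l]
  calc (∑ l : Fin M', ∫ ω, (S ω l) ^ 2 ∂P)
      ≤ ∑ _l : Fin M', L / n := Finset.sum_le_sum fun l _ => key l
    _ = M' * (L / n) := by
        rw [Finset.sum_const, Finset.card_univ, Fintype.card_fin, nsmul_eq_mul]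
    _ = L * M' / n := by ring
end

section
/- Let p have characteristic function φ and K satisfy 0 ≤ 𝓕[K] ≤ 1 with the monotonicity property 𝓕[K](h't) ≥ 𝓕[K](ht) for all t ∈ ℝ^d whenever 0 < h' < h. Then for any h > h' > 0, R_n(h) ≥ R_n(h') - (1/(n(2π)^d)) ∫ (1 - |φ(t)|²) |𝓕[K](h't)|² dt ≥ R_n(h') - ‖K‖²₂/(n (h')^d), where R_n(h) = (1/(2π)^d)∫[|1-𝓕[K](ht)|²|φ(t)|² + (1/n)(1-|φ(t)|²)|𝓕[K](ht)|²]dt. -/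
open MeasureTheory Complex Filter
open scoped Real RealInnerProductSpace Topology ENNReal

variable {d : ℕ}
local notation "𝔼" => EuclideanSpace ℝ (Fin d)

lemma gauss_int {δ : ℝ} (hδ : 0 < δ) :
    Integrable (fun v : 𝔼 => rexp (-δ * ‖v‖^2)) := by
  have h := (GaussianFourier.integrable_cexp_neg_mul_sq_norm_add (V := EuclideanSpace ℝ (Fin d))
      (b := (δ:ℂ)) (by simpa using hδ) 0 0).norm
  refine h.congr (Filter.EventuallyEq.symm (Filter.Eventually.of_forall fun v => ?_))
  show rexp (-δ * ‖v‖ ^ 2) = ‖cexp (-(δ:ℂ) * (‖v‖:ℂ) ^ 2 + 0 * ((inner ℝ (0:𝔼) v :ℝ):ℂ))‖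
  rw [Complex.norm_exp]
  norm_num
  left
  norm_cast

lemma gauss_val {δ : ℝ} (hδ : 0 < δ) :
    ∫ v : 𝔼, rexp (-δ * ‖v‖^2) = (π/δ) ^ ((d:ℝ)/2) := by
  rw [GaussianFourier.integral_rexp_neg_mul_sq_norm hδ]
  norm_num [finrank_euclideanSpace]

lemma cont_int {f : EuclideanSpace ℝ (Fin d) → ℝ} (hf : Integrable f) :
    Continuous fun t : 𝔼 => ∫ x, Complex.exp (Complex.I * (⟪x, t⟫ : ℝ)) * (f x : ℂ) := by
  apply continuous_of_dominated (bound := fun x => |f x|)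
  · intro t
    apply AEStronglyMeasurable.mul _ (Complex.continuous_ofReal.comp_aestronglyMeasurable hf.1)
    refine (Continuous.aestronglyMeasurable ?_)
    exact Complex.continuous_exp.comp (continuous_const.mul
      (Complex.continuous_ofReal.comp (continuous_id.inner continuous_const)))
  · intro t
    refine Filter.Eventually.of_forall fun x => ?_
    rw [norm_mul, Complex.norm_exp, Complex.norm_real]
    simp
  · exact hf.abs
  · refine Filter.Eventually.of_forall fun x => ?_
    exact (Complex.continuous_exp.comp (continuous_const.mul
      (Complex.continuous_ofReal.comp (continuous_const.inner continuous_id)))).mul continuous_const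

lemma keyA1 {K FK : EuclideanSpace ℝ (Fin d) → ℝ}
    (hKm : Measurable K) (hK1 : Integrable K) (hK2 : Integrable (fun x => K x ^ 2))
    (hFK : ∀ t, (FK t : ℂ) = ∫ x, Complex.exp (Complex.I * (⟪x, t⟫ : ℝ)) * (K x : ℂ))
    {b ε : ℝ} (hb : 0 < b) (hε : 0 < ε) :
    ∫ t : 𝔼, FK (b • t) ^ 2 * rexp (-ε * ‖t‖ ^ 2)
      ≤ (π/ε) ^ ((d:ℝ)/2) * ((π/(b^2/(4*ε))) ^ ((d:ℝ)/2) * ∫ x, K x ^ 2) := by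
  have hπ : (0:ℝ) < π := Real.pi_pos
  set δ : ℝ := b^2/(4*ε) with hδdef
  have hδ : 0 < δ := by positivity
  -- integrability of the double products
  have habs : Integrable (fun z : 𝔼 × 𝔼 => |K z.1| * |K z.2|) (volume.prod volume) :=
    hK1.abs.mul_prod hK1.abs
  have hGcont : Continuous (fun z : 𝔼 × 𝔼 => rexp (-δ * ‖z.1 - z.2‖^2)) :=
    Real.continuous_exp.comp (continuous_const.mul
      (((continuous_fst.sub continuous_snd).norm.pow 2)))
  have hG01 : ∀ z : 𝔼 × 𝔼, 0 < rexp (-δ * ‖z.1 - z.2‖^2) ∧ rexp (-δ * ‖z.1 - z.2‖^2) ≤ 1 := by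
    intro z
    refine ⟨Real.exp_pos _, Real.exp_le_one_iff.2 ?_⟩
    nlinarith [mul_nonneg hδ.le (sq_nonneg ‖z.1 - z.2‖)]
  have hKKGm : AEStronglyMeasurable (fun z : 𝔼 × 𝔼 => K z.1 * K z.2 * rexp (-δ * ‖z.1 - z.2‖^2))
      (volume.prod volume) :=
    (((hKm.comp measurable_fst).mul (hKm.comp measurable_snd)).mul
      hGcont.measurable).aestronglyMeasurable
  have hKKG : Integrable (fun z : 𝔼 × 𝔼 => K z.1 * K z.2 * rexp (-δ * ‖z.1 - z.2‖^2))
      (volume.prod volume) := by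
    refine habs.mono' hKKGm (Filter.Eventually.of_forall fun z => ?_)
    rw [Real.norm_eq_abs, abs_mul, abs_mul, abs_of_pos (hG01 z).1]
    exact mul_le_of_le_one_right (mul_nonneg (abs_nonneg _) (abs_nonneg _)) (hG01 z).2
  -- integrability of K z.1 ^2 * G z
  have h2 : Integrable (fun z : 𝔼 × 𝔼 => K z.1 ^ 2 * rexp (-δ * ‖z.1 - z.2‖^2))
      (volume.prod volume) := by
    have hm : AEStronglyMeasurable (fun z : 𝔼 × 𝔼 => K z.1 ^ 2 * rexp (-δ * ‖z.1 - z.2‖^2))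
        (volume.prod volume) :=
      (((hKm.comp measurable_fst).pow_const 2).mul hGcont.measurable).aestronglyMeasurable
    rw [integrable_prod_iff hm]
    constructor
    · refine Filter.Eventually.of_forall fun x => ?_
      simpa using (((gauss_int hδ).comp_sub_left x).const_mul (K x ^ 2))
    · have hval : ∀ x : 𝔼, (∫ y, ‖K x ^ 2 * rexp (-δ * ‖x - y‖^2)‖) = K x ^ 2 * (π/δ) ^ ((d:ℝ)/2) := by
        intro x
        have : ∀ y : 𝔼, ‖K x ^ 2 * rexp (-δ * ‖x - y‖^2)‖ = K x ^ 2 * rexp (-δ * ‖x - y‖^2) := by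
          intro y; exact Real.norm_of_nonneg (by positivity)
        rw [integral_congr_ae (Filter.Eventually.of_forall this), integral_const_mul,
          integral_sub_left_eq_self (fun v : 𝔼 => rexp (-δ * ‖v‖^2)) volume x, gauss_val hδ]
      refine (hK2.mul_const ((π/δ) ^ ((d:ℝ)/2))).congr ?_
      exact Filter.Eventually.of_forall fun x => (hval x).symm
  have h3 : Integrable (fun z : 𝔼 × 𝔼 => K z.2 ^ 2 * rexp (-δ * ‖z.1 - z.2‖^2))
      (volume.prod volume) := by
    refine h2.swap.congr (Filter.Eventually.of_forall fun z => ?_)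
    simp [Function.comp, norm_sub_rev z.2 z.1]
  -- values of the two integrals
  have hval2 : ∫ z : 𝔼 × 𝔼, K z.1 ^ 2 * rexp (-δ * ‖z.1 - z.2‖^2) ∂(volume.prod volume)
      = (π/δ) ^ ((d:ℝ)/2) * ∫ x, K x ^ 2 := by
    rw [integral_prod _ h2]
    have : ∀ x : 𝔼, (∫ y, K x ^ 2 * rexp (-δ * ‖x - y‖^2)) = K x ^ 2 * (π/δ) ^ ((d:ℝ)/2) := by
      intro x
      rw [integral_const_mul, integral_sub_left_eq_self (fun v : 𝔼 => rexp (-δ * ‖v‖^2)) volume x,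
        gauss_val hδ]
    rw [integral_congr_ae (Filter.Eventually.of_forall this), integral_mul_const]
    ring
  have hval3 : ∫ z : 𝔼 × 𝔼, K z.2 ^ 2 * rexp (-δ * ‖z.1 - z.2‖^2) ∂(volume.prod volume)
      = (π/δ) ^ ((d:ℝ)/2) * ∫ x, K x ^ 2 := by
    rw [integral_prod_symm _ h3]
    have : ∀ y : 𝔼, (∫ x, K y ^ 2 * rexp (-δ * ‖x - y‖^2)) = K y ^ 2 * (π/δ) ^ ((d:ℝ)/2) := by
      intro y
      rw [integral_const_mul, integral_sub_right_eq_self (fun v : 𝔼 => rexp (-δ * ‖v‖^2)) y,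
        gauss_val hδ]
    rw [integral_congr_ae (Filter.Eventually.of_forall this), integral_mul_const]
    ring
  -- the AM-GM bound on the double integral
  have hclaim2 : ∫ z : 𝔼 × 𝔼, K z.1 * K z.2 * rexp (-δ * ‖z.1 - z.2‖^2) ∂(volume.prod volume)
      ≤ (π/δ) ^ ((d:ℝ)/2) * ∫ x, K x ^ 2 := by
    have step : ∫ z : 𝔼 × 𝔼, K z.1 * K z.2 * rexp (-δ * ‖z.1 - z.2‖^2) ∂(volume.prod volume)
        ≤ ∫ z : 𝔼 × 𝔼, (2⁻¹ * (K z.1 ^ 2 * rexp (-δ * ‖z.1 - z.2‖^2))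
            + 2⁻¹ * (K z.2 ^ 2 * rexp (-δ * ‖z.1 - z.2‖^2))) ∂(volume.prod volume) := by
      refine integral_mono hKKG ((h2.const_mul _).add (h3.const_mul _)) fun z => ?_
      nlinarith [mul_nonneg (hG01 z).1.le (sq_nonneg (K z.1 - K z.2))]
    calc ∫ z : 𝔼 × 𝔼, K z.1 * K z.2 * rexp (-δ * ‖z.1 - z.2‖^2) ∂(volume.prod volume)
        ≤ _ := step
      _ = (π/δ) ^ ((d:ℝ)/2) * ∫ x, K x ^ 2 := by
          rw [integral_add (h2.const_mul _) (h3.const_mul _), integral_const_mul,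
            integral_const_mul, hval2, hval3]
          ring
  -- the key complex identity
  have hd : (Module.finrank ℝ (EuclideanSpace ℝ (Fin d)) : ℂ) = (d : ℂ) := by
    norm_cast
    exact finrank_euclideanSpace_fin
  have key : ∫ t : 𝔼, FK (b • t) ^ 2 * rexp (-ε * ‖t‖ ^ 2)
      = (π/ε) ^ ((d:ℝ)/2) *
        ∫ z : 𝔼 × 𝔼, K z.1 * K z.2 * rexp (-δ * ‖z.1 - z.2‖^2) ∂(volume.prod volume) := by
    have step1 : ∀ t : 𝔼, ((FK (b • t) ^ 2 * rexp (-ε * ‖t‖ ^ 2) : ℝ) : ℂ)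
        = ∫ z : 𝔼 × 𝔼, ((K z.1 : ℂ) * (K z.2 : ℂ)) *
            cexp (-(ε:ℂ) * (‖t‖:ℂ)^2 + I * ((⟪b • (z.1 - z.2), t⟫ : ℝ) : ℂ))
            ∂(volume.prod volume) := by
      intro t
      have e1 : ((FK (b • t) : ℝ) : ℂ) = ∫ x, cexp (I * ((⟪x, b • t⟫ : ℝ) : ℂ)) * (K x : ℂ) :=
        hFK _
      have e2 : ((FK (b • t) : ℝ) : ℂ)
          = ∫ y, cexp (-(I * ((⟪y, b • t⟫ : ℝ) : ℂ))) * (K y : ℂ) := by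
        have h := congrArg (starRingEnd ℂ) e1
        rw [Complex.conj_ofReal, ← integral_conj] at h
        rw [h]
        refine integral_congr_ae (Filter.Eventually.of_forall fun y => ?_)
        simp only [map_mul, ← Complex.exp_conj, Complex.conj_I, Complex.conj_ofReal, neg_mul]
      have prodrep : ((FK (b • t) : ℝ) : ℂ) * ((FK (b • t) : ℝ) : ℂ)
          = ∫ z : 𝔼 × 𝔼, (cexp (I * ((⟪z.1, b • t⟫ : ℝ) : ℂ)) * (K z.1 : ℂ)) *
              (cexp (-(I * ((⟪z.2, b • t⟫ : ℝ) : ℂ))) * (K z.2 : ℂ)) ∂(volume.prod volume) := by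
        have hpm := integral_prod_mul (μ := (volume : Measure 𝔼)) (ν := (volume : Measure 𝔼))
          (f := fun x : 𝔼 => cexp (Complex.I * ((⟪x, b • t⟫ : ℝ) : ℂ)) * (K x : ℂ))
          (g := fun y : 𝔼 => cexp (-(Complex.I * ((⟪y, b • t⟫ : ℝ) : ℂ))) * (K y : ℂ))
        rw [← e1, ← e2] at hpm
        exact hpm.symm
      calc ((FK (b • t) ^ 2 * rexp (-ε * ‖t‖ ^ 2) : ℝ) : ℂ)
          = cexp (((-ε * ‖t‖ ^ 2 : ℝ)) : ℂ) *
              (((FK (b • t) : ℝ) : ℂ) * ((FK (b • t) : ℝ) : ℂ)) := by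
            push_cast
            ring
        _ = cexp (((-ε * ‖t‖ ^ 2 : ℝ)) : ℂ) *
              ∫ z : 𝔼 × 𝔼, (cexp (I * ((⟪z.1, b • t⟫ : ℝ) : ℂ)) * (K z.1 : ℂ)) *
                (cexp (-(I * ((⟪z.2, b • t⟫ : ℝ) : ℂ))) * (K z.2 : ℂ)) ∂(volume.prod volume) := by
            rw [prodrep]
        _ = ∫ z : 𝔼 × 𝔼, cexp (((-ε * ‖t‖ ^ 2 : ℝ)) : ℂ) *
              ((cexp (I * ((⟪z.1, b • t⟫ : ℝ) : ℂ)) * (K z.1 : ℂ)) *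
                (cexp (-(I * ((⟪z.2, b • t⟫ : ℝ) : ℂ))) * (K z.2 : ℂ))) ∂(volume.prod volume) :=
            (integral_const_mul _ _).symm
        _ = _ := by
            refine integral_congr_ae (Filter.Eventually.of_forall fun z => ?_)
            have hA : (-(ε:ℂ) * (‖t‖:ℂ)^2 + I * ((⟪b • (z.1 - z.2), t⟫ : ℝ) : ℂ))
                = ((-ε * ‖t‖ ^ 2 : ℝ) : ℂ) + ((I * ((⟪z.1, b • t⟫ : ℝ) : ℂ))
                    + (-(I * ((⟪z.2, b • t⟫ : ℝ) : ℂ)))) := by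
              have h1 : (⟪b • (z.1 - z.2), t⟫ : ℝ) = b * ⟪z.1, t⟫ - b * ⟪z.2, t⟫ := by
                rw [real_inner_smul_left, inner_sub_left]; ring
              have h2 : (⟪z.1, b • t⟫ : ℝ) = b * ⟪z.1, t⟫ := real_inner_smul_right _ _ _
              have h3 : (⟪z.2, b • t⟫ : ℝ) = b * ⟪z.2, t⟫ := real_inner_smul_right _ _ _
              rw [h1, h2, h3]
              push_cast
              ring
            show cexp _ * _ = _ * cexp _
            rw [hA, Complex.exp_add, Complex.exp_add]
            ring
    have hInt : Integrable (Function.uncurry fun (t : 𝔼) (z : 𝔼 × 𝔼) =>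
        ((K z.1 : ℂ) * (K z.2 : ℂ)) *
          cexp (-(ε:ℂ) * (‖t‖:ℂ)^2 + I * ((⟪b • (z.1 - z.2), t⟫ : ℝ) : ℂ)))
        (volume.prod (volume.prod volume)) := by
      have m1 : Measurable fun q : 𝔼 × (𝔼 × 𝔼) => ((K q.2.1 : ℂ) * (K q.2.2 : ℂ)) :=
        (Complex.measurable_ofReal.comp (hKm.comp (measurable_fst.comp measurable_snd))).mul
          (Complex.measurable_ofReal.comp (hKm.comp (measurable_snd.comp measurable_snd)))
      have m2 : Continuous fun q : 𝔼 × (𝔼 × 𝔼) =>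
          cexp (-(ε:ℂ) * (‖q.1‖:ℂ)^2 + I * ((⟪b • (q.2.1 - q.2.2), q.1⟫ : ℝ) : ℂ)) := by
        apply Complex.continuous_exp.comp
        apply Continuous.add
        · exact continuous_const.mul ((Complex.continuous_ofReal.comp continuous_fst.norm).pow 2)
        · exact continuous_const.mul (Complex.continuous_ofReal.comp
            ((((continuous_fst.comp continuous_snd).sub
              (continuous_snd.comp continuous_snd)).const_smul b).inner continuous_fst))
      refine Integrable.mono' ((gauss_int hε).mul_prod habs)
        ((m1.mul m2.measurable).aestronglyMeasurable)
        (Filter.Eventually.of_forall fun q => ?_)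
      have hre : (-(ε:ℂ) * (‖q.1‖:ℂ)^2 + I * ((⟪b • (q.2.1 - q.2.2), q.1⟫ : ℝ) : ℂ)).re
          = -ε * ‖q.1‖^2 := by
        have hc : ((‖q.1‖:ℂ))^2 = ((‖q.1‖^2 : ℝ) : ℂ) := by norm_cast
        rw [hc, Complex.add_re, Complex.mul_re]
        simp
        left
        norm_cast
      rw [Function.uncurry]
      rw [norm_mul, norm_mul, Complex.norm_real, Complex.norm_real, Complex.norm_exp, hre,
        Real.norm_eq_abs, Real.norm_eq_abs]
      exact le_of_eq (by ring)
    have step3 : ∀ z : 𝔼 × 𝔼, (∫ t : 𝔼, ((K z.1 : ℂ) * (K z.2 : ℂ)) *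
          cexp (-(ε:ℂ) * (‖t‖:ℂ)^2 + I * ((⟪b • (z.1 - z.2), t⟫ : ℝ) : ℂ)))
        = (((π/ε) ^ ((d:ℝ)/2) * (K z.1 * K z.2 * rexp (-δ * ‖z.1 - z.2‖^2)) : ℝ) : ℂ) := by
      intro z
      rw [integral_const_mul]
      have hg := GaussianFourier.integral_cexp_neg_mul_sq_norm_add
        (V := EuclideanSpace ℝ (Fin d)) (b := (ε:ℂ)) (by simpa using hε) I (b • (z.1 - z.2))
      rw [hg]
      have hnorm : ‖b • (z.1 - z.2)‖ = b * ‖z.1 - z.2‖ := by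
        rw [norm_smul, Real.norm_eq_abs, abs_of_pos hb]
      have hexp : (I ^ 2 * ((‖b • (z.1 - z.2)‖ : ℝ) : ℂ)^2 / (4 * (ε:ℂ)))
          = ((-δ * ‖z.1 - z.2‖^2 : ℝ) : ℂ) := by
        rw [Complex.I_sq, hnorm, hδdef]
        push_cast
        field_simp
      have hpow : ((π:ℂ)/(ε:ℂ)) ^ (((Module.finrank ℝ (EuclideanSpace ℝ (Fin d))) : ℂ)/2)
          = (((π/ε) ^ ((d:ℝ)/2) : ℝ) : ℂ) := by
        rw [hd, Complex.ofReal_cpow (by positivity : (0:ℝ) ≤ π/ε)]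
        push_cast
        ring_nf
      rw [hexp, hpow, ← Complex.ofReal_exp]
      push_cast
      ring
    apply Complex.ofReal_inj.mp
    calc ((∫ t : 𝔼, FK (b • t) ^ 2 * rexp (-ε * ‖t‖ ^ 2) : ℝ) : ℂ)
        = (∫ t : 𝔼, ((FK (b • t) ^ 2 * rexp (-ε * ‖t‖ ^ 2) : ℝ) : ℂ)) := integral_ofReal.symm
      _ = ∫ t : 𝔼, (∫ z : 𝔼 × 𝔼, ((K z.1 : ℂ) * (K z.2 : ℂ)) *
            cexp (-(ε:ℂ) * (‖t‖:ℂ)^2 + I * ((⟪b • (z.1 - z.2), t⟫ : ℝ) : ℂ))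
            ∂(volume.prod volume)) :=
          integral_congr_ae (Filter.Eventually.of_forall step1)
      _ = ∫ z : 𝔼 × 𝔼, (∫ t : 𝔼, ((K z.1 : ℂ) * (K z.2 : ℂ)) *
            cexp (-(ε:ℂ) * (‖t‖:ℂ)^2 + I * ((⟪b • (z.1 - z.2), t⟫ : ℝ) : ℂ)))
            ∂(volume.prod volume) := integral_integral_swap hInt
      _ = ∫ z : 𝔼 × 𝔼, (((π/ε) ^ ((d:ℝ)/2) * (K z.1 * K z.2 * rexp (-δ * ‖z.1 - z.2‖^2)) : ℝ) : ℂ)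
            ∂(volume.prod volume) := integral_congr_ae (Filter.Eventually.of_forall step3)
      _ = ((∫ z : 𝔼 × 𝔼, (π/ε) ^ ((d:ℝ)/2) * (K z.1 * K z.2 * rexp (-δ * ‖z.1 - z.2‖^2))
            ∂(volume.prod volume) : ℝ) : ℂ) := integral_ofReal
      _ = _ := by rw [integral_const_mul]
  rw [key]
  have hc0 : (0:ℝ) ≤ (π/ε) ^ ((d:ℝ)/2) := by positivity
  exact mul_le_mul_of_nonneg_left hclaim2 hc0

lemma keyB {K FK : EuclideanSpace ℝ (Fin d) → ℝ}
    (hKm : Measurable K) (hK1 : Integrable K) (hK2 : Integrable (fun x => K x ^ 2))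
    (hFKm : Measurable FK)
    (hFK : ∀ t, (FK t : ℂ) = ∫ x, Complex.exp (Complex.I * (⟪x, t⟫ : ℝ)) * (K x : ℂ))
    (hFK01 : ∀ t, FK t ∈ Set.Icc (0 : ℝ) 1)
    {b : ℝ} (hb : 0 < b) :
    Integrable (fun t : 𝔼 => FK (b • t) ^ 2)
      ∧ ∫ t : 𝔼, FK (b • t) ^ 2 ≤ (2 * π / b) ^ d * ∫ x, K x ^ 2 := by
  have hπ : (0:ℝ) < π := Real.pi_pos
  have hK2nn : (0:ℝ) ≤ ∫ x, K x ^ 2 := integral_nonneg fun x => sq_nonneg _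
  have hq : Measurable fun t : 𝔼 => FK (b • t) ^ 2 :=
    (hFKm.comp (measurable_const_smul b)).pow_const 2
  have hcoef : ∀ ε : ℝ, 0 < ε →
      (π/ε) ^ ((d:ℝ)/2) * ((π/(b^2/(4*ε))) ^ ((d:ℝ)/2) * ∫ x, K x ^ 2)
        = (2 * π / b) ^ d * ∫ x, K x ^ 2 := by
    intro ε hε
    rw [← mul_assoc, ← Real.mul_rpow (by positivity) (by positivity)]
    congr 1
    have h1 : (π/ε) * (π/(b^2/(4*ε))) = (2*π/b)^2 := by
      field_simp
      ring
    rw [h1, ← Real.rpow_natCast (2*π/b) 2, ← Real.rpow_mul (by positivity),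
      show ((2:ℕ):ℝ) * ((d:ℝ)/2) = (d:ℝ) by push_cast; ring, Real.rpow_natCast]
  have hmeasm : ∀ m : ℕ, Measurable fun t : 𝔼 =>
      ENNReal.ofReal (FK (b • t) ^ 2 * rexp (-(1/((m:ℝ)+1)) * ‖t‖^2)) := fun m =>
    ENNReal.measurable_ofReal.comp (hq.mul
      (Real.measurable_exp.comp ((measurable_norm.pow_const 2).const_mul _)))
  have hbound : ∀ m : ℕ, (∫⁻ t : 𝔼, ENNReal.ofReal (FK (b • t) ^ 2 * rexp (-(1/((m:ℝ)+1)) * ‖t‖^2)))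
      ≤ ENNReal.ofReal ((2 * π / b) ^ d * ∫ x, K x ^ 2) := by
    intro m
    have hεm : (0:ℝ) < 1/((m:ℝ)+1) := by positivity
    have hintm : Integrable (fun t : 𝔼 => FK (b • t) ^ 2 * rexp (-(1/((m:ℝ)+1)) * ‖t‖^2)) := by
      refine (gauss_int hεm).mono' ((hq.mul
        (Real.measurable_exp.comp ((measurable_norm.pow_const 2).const_mul _))).aestronglyMeasurable)
        (Filter.Eventually.of_forall fun t => ?_)
      rw [Real.norm_of_nonneg (mul_nonneg (sq_nonneg _) (Real.exp_pos _).le)]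
      have h1 : FK (b • t) ^ 2 ≤ 1 := by
        have := (hFK01 (b • t)).1
        have := (hFK01 (b • t)).2
        nlinarith
      exact mul_le_of_le_one_left (Real.exp_pos _).le h1
    rw [← ofReal_integral_eq_lintegral_ofReal hintm
      (Filter.Eventually.of_forall fun t => mul_nonneg (sq_nonneg _) (Real.exp_pos _).le)]
    exact ENNReal.ofReal_le_ofReal
      (le_of_le_of_eq (keyA1 hKm hK1 hK2 hFK hb hεm) (hcoef _ hεm))
  have hlim : ∀ t : 𝔼, Tendsto
      (fun m : ℕ => ENNReal.ofReal (FK (b • t) ^ 2 * rexp (-(1/((m:ℝ)+1)) * ‖t‖^2))) atTop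
      (𝓝 (ENNReal.ofReal (FK (b • t) ^ 2))) := by
    intro t
    apply ENNReal.tendsto_ofReal
    have h0 : Tendsto (fun m : ℕ => -(1/((m:ℝ)+1)) * ‖t‖^2) atTop (𝓝 0) := by
      have h := tendsto_one_div_add_atTop_nhds_zero_nat (𝕜 := ℝ)
      have := (h.neg).mul_const (‖t‖^2)
      simpa using this
    have h1 : Tendsto (fun m : ℕ => rexp (-(1/((m:ℝ)+1)) * ‖t‖^2)) atTop (𝓝 1) := by
      have := (Real.continuous_exp.tendsto 0).comp h0
      simpa [Function.comp_def] using this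
    have := tendsto_const_nhds (x := FK (b • t) ^ 2) (f := (atTop : Filter ℕ)) |>.mul h1
    simpa using this
  have hA : ∫⁻ t : 𝔼, ENNReal.ofReal (FK (b • t) ^ 2)
      ≤ ENNReal.ofReal ((2 * π / b) ^ d * ∫ x, K x ^ 2) := by
    have hcongr : ∀ t : 𝔼, ENNReal.ofReal (FK (b • t) ^ 2)
        = liminf (fun m : ℕ =>
            ENNReal.ofReal (FK (b • t) ^ 2 * rexp (-(1/((m:ℝ)+1)) * ‖t‖^2))) atTop :=
      fun t => ((hlim t).liminf_eq).symm
    calc ∫⁻ t : 𝔼, ENNReal.ofReal (FK (b • t) ^ 2)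
        = ∫⁻ t : 𝔼, liminf (fun m : ℕ =>
            ENNReal.ofReal (FK (b • t) ^ 2 * rexp (-(1/((m:ℝ)+1)) * ‖t‖^2))) atTop :=
          lintegral_congr hcongr
      _ ≤ liminf (fun m : ℕ => ∫⁻ t : 𝔼,
            ENNReal.ofReal (FK (b • t) ^ 2 * rexp (-(1/((m:ℝ)+1)) * ‖t‖^2))) atTop :=
          lintegral_liminf_le hmeasm
      _ ≤ ENNReal.ofReal ((2 * π / b) ^ d * ∫ x, K x ^ 2) :=
          liminf_le_of_frequently_le (Filter.Frequently.of_forall hbound)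
  have hint : Integrable (fun t : 𝔼 => FK (b • t) ^ 2) := by
    refine ⟨hq.aestronglyMeasurable, ?_⟩
    have heq : (∫⁻ t : 𝔼, ‖FK (b • t) ^ 2‖ₑ)
        = ∫⁻ t : 𝔼, ENNReal.ofReal (FK (b • t) ^ 2) :=
      lintegral_congr fun t => Real.enorm_eq_ofReal (sq_nonneg _)
    exact lt_of_le_of_lt (heq ▸ hA) ENNReal.ofReal_lt_top
  refine ⟨hint, ?_⟩
  rw [integral_eq_lintegral_of_nonneg_ae (Filter.Eventually.of_forall fun t => sq_nonneg _)
    hq.aestronglyMeasurable]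
  exact ENNReal.toReal_le_of_le_ofReal (mul_nonneg (by positivity) hK2nn) hA

set_option maxHeartbeats 1000000 in
theorem mise_monotone_comparison
    (d n : ℕ) (hn : 0 < n) (h h' : ℝ) (hh' : 0 < h') (hhh : h' < h)
    (p : EuclideanSpace ℝ (Fin d) → ℝ)
    (hp_nonneg : ∀ x, 0 ≤ p x) (hp_meas : Measurable p)
    (hp_int : (∫ x, p x) = 1)
    (φ : EuclideanSpace ℝ (Fin d) → ℂ)
    (hφ : ∀ t, φ t = ∫ x, Complex.exp (Complex.I * (⟪x, t⟫ : ℝ)) * (p x : ℂ))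
    (K : EuclideanSpace ℝ (Fin d) → ℝ) (hK : MemLp K 2 volume)
    (FK : EuclideanSpace ℝ (Fin d) → ℝ)
    (hFK : ∀ t, (FK t : ℂ) = ∫ x, Complex.exp (Complex.I * (⟪x, t⟫ : ℝ)) * (K x : ℂ))
    (hFK01 : ∀ t, FK t ∈ Set.Icc (0 : ℝ) 1)
    (hmono : ∀ (t : EuclideanSpace ℝ (Fin d)) (a b : ℝ), 0 < b → b < a →
        FK (a • t) ≤ FK (b • t))
    (R : ℝ → ℝ)
    (hR : ∀ b : ℝ, R b = (1 / (2 * Real.pi) ^ d) *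
        ∫ t, ((1 - FK (b • t)) ^ 2 * ‖φ t‖ ^ 2
          + (1 / (n : ℝ)) * (1 - ‖φ t‖ ^ 2) * (FK (b • t)) ^ 2)) :
    R h ≥ R h' - (1 / ((n : ℝ) * (2 * Real.pi) ^ d)) *
        (∫ t, (1 - ‖φ t‖ ^ 2) * (FK (h' • t)) ^ 2) ∧
    R h' - (1 / ((n : ℝ) * (2 * Real.pi) ^ d)) *
        (∫ t, (1 - ‖φ t‖ ^ 2) * (FK (h' • t)) ^ 2)
      ≥ R h' - (∫ x, (K x) ^ 2) / (n * h' ^ (d : ℝ)) := by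
  have hπ : (0:ℝ) < π := Real.pi_pos
  have hn' : (0:ℝ) < (n:ℝ) := by exact_mod_cast hn
  have hK2int : Integrable (fun x => K x ^ 2) := hK.integrable_sq
  have hK2nn : (0:ℝ) ≤ ∫ x, K x ^ 2 := integral_nonneg fun x => sq_nonneg _
  have hrpow : h' ^ (d:ℝ) = h' ^ d := Real.rpow_natCast _ _
  have hden : (0:ℝ) < (n:ℝ) * h' ^ (d:ℝ) := by rw [hrpow]; positivity
  by_cases hKint : Integrable K
  swap
  · -- K not integrable : FK ≡ 0
    have hFK0 : ∀ t, FK t = 0 := by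
      intro t
      have hni : ¬ Integrable (fun x : EuclideanSpace ℝ (Fin d) =>
          Complex.exp (Complex.I * (⟪x, t⟫ : ℝ)) * (K x : ℂ)) := by
        intro hcon
        apply hKint
        have h1 := hcon.norm
        have h2 : (fun x : EuclideanSpace ℝ (Fin d) =>
            ‖Complex.exp (Complex.I * (⟪x, t⟫ : ℝ)) * (K x : ℂ)‖) = fun x => ‖K x‖ := by
          funext x
          rw [norm_mul, Complex.norm_exp, Complex.norm_real]
          simp
        rw [h2] at h1
        exact (integrable_norm_iff hK.1).mp h1
      have hz := hFK t
      rw [integral_undef hni] at hz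
      exact_mod_cast hz
    have hg0 : (∫ t, (1 - ‖φ t‖ ^ 2) * (FK (h' • t)) ^ 2) = 0 := by
      simp [hFK0]
    have hReq : R h = R h' := by
      rw [hR h, hR h']
      congr 1
      refine integral_congr_ae (Filter.Eventually.of_forall fun t => ?_)
      simp [hFK0]
    constructor
    · rw [hg0, mul_zero, sub_zero, hReq]
    · rw [hg0, mul_zero, sub_zero]
      have hd0 : 0 ≤ (∫ x, (K x) ^ 2) / ((n:ℝ) * h' ^ (d:ℝ)) := div_nonneg hK2nn hden.le
      linarith
  -- main case : K integrable
  obtain ⟨K₀, hK₀m, hKK₀⟩ : ∃ K₀, Measurable K₀ ∧ K =ᵐ[volume] K₀ :=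
    ⟨hK.1.aemeasurable.mk K, hK.1.aemeasurable.measurable_mk, hK.1.aemeasurable.ae_eq_mk⟩
  have hK₀1 : Integrable K₀ := hKint.congr hKK₀
  have hKK₀sq : (fun x => K x ^ 2) =ᵐ[volume] (fun x => K₀ x ^ 2) :=
    hKK₀.mono fun x hx => by simp only [hx]
  have hK₀2 : Integrable (fun x => K₀ x ^ 2) := hK2int.congr hKK₀sq
  have hK₀eq : (∫ x, K₀ x ^ 2) = ∫ x, K x ^ 2 := integral_congr_ae hKK₀sq.symm
  have hFK₀ : ∀ t, (FK t : ℂ) = ∫ x, Complex.exp (Complex.I * (⟪x, t⟫ : ℝ)) * (K₀ x : ℂ) := by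
    intro t
    rw [hFK t]
    exact integral_congr_ae (hKK₀.mono fun x hx => by simp only [hx])
  have hFKc : Continuous FK := by
    have hc := cont_int hKint
    have he : FK = fun t => (∫ x, Complex.exp (Complex.I * (⟪x, t⟫ : ℝ)) * (K x : ℂ)).re := by
      funext t
      rw [← hFK t, Complex.ofReal_re]
    rw [he]
    exact Complex.continuous_re.comp hc
  have hFKm : Measurable FK := hFKc.measurable
  obtain ⟨hq'int, hq'bd⟩ := keyB hK₀m hK₀1 hK₀2 hFKm hFK₀ hFK01 hh'
  rw [hK₀eq] at hq'bd
  obtain ⟨hqhint, -⟩ := keyB hK₀m hK₀1 hK₀2 hFKm hFK₀ hFK01 (lt_trans hh' hhh)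
  have hpint : Integrable p := by
    by_contra hc
    rw [integral_undef hc] at hp_int
    norm_num at hp_int
  have hφ1 : ∀ t, ‖φ t‖ ≤ 1 := by
    intro t
    rw [hφ t]
    calc ‖∫ x, Complex.exp (Complex.I * (⟪x, t⟫ : ℝ)) * (p x : ℂ)‖
        ≤ ∫ x, ‖Complex.exp (Complex.I * (⟪x, t⟫ : ℝ)) * (p x : ℂ)‖ :=
          norm_integral_le_integral_norm _
      _ = ∫ x, p x := by
          refine integral_congr_ae (Filter.Eventually.of_forall fun x => ?_)
          show ‖Complex.exp (Complex.I * (⟪x, t⟫ : ℝ)) * (p x : ℂ)‖ = p x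
          rw [norm_mul, Complex.norm_exp, Complex.norm_real,
            Real.norm_of_nonneg (hp_nonneg x)]
          simp
      _ = 1 := hp_int
  have hφc : Continuous φ := by
    have hc := cont_int hpint
    have he : φ = fun t => ∫ x, Complex.exp (Complex.I * (⟪x, t⟫ : ℝ)) * (p x : ℂ) := funext hφ
    rw [he]
    exact hc
  have hP01 : ∀ t, 0 ≤ ‖φ t‖ ^ 2 ∧ ‖φ t‖ ^ 2 ≤ 1 := fun t =>
    ⟨by positivity, by nlinarith [norm_nonneg (φ t), hφ1 t]⟩
  have hPm : Measurable fun t => ‖φ t‖ ^ 2 :=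
    ((continuous_norm.comp hφc).pow 2).measurable
  -- the remainder term g
  have hgm : Measurable fun t : EuclideanSpace ℝ (Fin d) =>
      (1 - ‖φ t‖ ^ 2) * (FK (h' • t)) ^ 2 :=
    (measurable_const.sub hPm).mul ((hFKm.comp (measurable_const_smul h')).pow_const 2)
  have hgnn : ∀ t, 0 ≤ (1 - ‖φ t‖ ^ 2) * (FK (h' • t)) ^ 2 := fun t =>
    mul_nonneg (by linarith [(hP01 t).2]) (sq_nonneg _)
  have hgle : ∀ t, (1 - ‖φ t‖ ^ 2) * (FK (h' • t)) ^ 2 ≤ (FK (h' • t)) ^ 2 := fun t =>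
    mul_le_of_le_one_left (sq_nonneg _) (by linarith [(hP01 t).1])
  have hgint : Integrable (fun t : EuclideanSpace ℝ (Fin d) =>
      (1 - ‖φ t‖ ^ 2) * (FK (h' • t)) ^ 2) :=
    hq'int.mono' hgm.aestronglyMeasurable
      (Filter.Eventually.of_forall fun t => by
        rw [Real.norm_of_nonneg (hgnn t)]; exact hgle t)
  have hgJnn : 0 ≤ ∫ t, (1 - ‖φ t‖ ^ 2) * (FK (h' • t)) ^ 2 := integral_nonneg hgnn
  -- analogous remainder term for bandwidth h
  have hghm : Measurable fun t : EuclideanSpace ℝ (Fin d) =>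
      (1 - ‖φ t‖ ^ 2) * (FK (h • t)) ^ 2 :=
    (measurable_const.sub hPm).mul ((hFKm.comp (measurable_const_smul h)).pow_const 2)
  have hghint : Integrable (fun t : EuclideanSpace ℝ (Fin d) =>
      (1 - ‖φ t‖ ^ 2) * (FK (h • t)) ^ 2) :=
    hqhint.mono' hghm.aestronglyMeasurable
      (Filter.Eventually.of_forall fun t => by
        rw [Real.norm_of_nonneg (mul_nonneg (by linarith [(hP01 t).2]) (sq_nonneg _))]
        exact mul_le_of_le_one_left (sq_nonneg _) (by linarith [(hP01 t).1]))
  have hFKmono : ∀ t : EuclideanSpace ℝ (Fin d), FK (h • t) ≤ FK (h' • t) := fun t =>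
    hmono t h h' hh' hhh
  constructor
  · -- first inequality
    rw [hR h, hR h', ge_iff_le]
    have hsuff : (∫ t, ((1 - FK (h' • t)) ^ 2 * ‖φ t‖ ^ 2
          + (1 / (n : ℝ)) * (1 - ‖φ t‖ ^ 2) * (FK (h' • t)) ^ 2))
        - (1 / (n:ℝ)) * (∫ t, (1 - ‖φ t‖ ^ 2) * (FK (h' • t)) ^ 2)
        ≤ ∫ t, ((1 - FK (h • t)) ^ 2 * ‖φ t‖ ^ 2
          + (1 / (n : ℝ)) * (1 - ‖φ t‖ ^ 2) * (FK (h • t)) ^ 2) := by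
      by_cases hint' : Integrable (fun t : EuclideanSpace ℝ (Fin d) =>
          (1 - FK (h' • t)) ^ 2 * ‖φ t‖ ^ 2)
      · -- integrable case
        have hgs' : Integrable (fun t : EuclideanSpace ℝ (Fin d) =>
            (1 / (n:ℝ)) * ((1 - ‖φ t‖ ^ 2) * (FK (h' • t)) ^ 2)) :=
          hgint.const_mul (1/(n:ℝ))
        have hintf' : Integrable (fun t : EuclideanSpace ℝ (Fin d) =>
            (1 - FK (h' • t)) ^ 2 * ‖φ t‖ ^ 2
              + (1 / (n : ℝ)) * (1 - ‖φ t‖ ^ 2) * (FK (h' • t)) ^ 2) :=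
          (hint'.add hgs').congr
            (Filter.Eventually.of_forall fun t => by
              simp only [Pi.add_apply]
              ring)
        have hinta : Integrable (fun t : EuclideanSpace ℝ (Fin d) =>
            (1 - FK (h • t)) ^ 2 * ‖φ t‖ ^ 2) := by
          refine Integrable.mono' ((hint'.const_mul 2).add (hq'int.const_mul 2))
            (((measurable_const.sub (hFKm.comp (measurable_const_smul h))).pow_const 2).mul
              hPm).aestronglyMeasurable (Filter.Eventually.of_forall fun t => ?_)
          simp only [Pi.add_apply]
          rw [Real.norm_of_nonneg (mul_nonneg (sq_nonneg _) (sq_nonneg _))]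
          have h3 := (hFK01 (h • t)).1
          have h4 := hFKmono t
          have h5 := (hFK01 (h' • t)).2
          have h1 := (hP01 t).1
          have h2 := (hP01 t).2
          have e1 : (1 - FK (h • t))^2 * ‖φ t‖ ^ 2
              ≤ (2*(1 - FK (h' • t))^2 + 2*(FK (h' • t) - FK (h • t))^2) * ‖φ t‖ ^ 2 :=
            mul_le_mul_of_nonneg_right
              (by nlinarith [sq_nonneg (1 - 2*FK (h' • t) + FK (h • t))]) h1
          have e2 : (FK (h' • t) - FK (h • t))^2 * ‖φ t‖ ^ 2 ≤ FK (h' • t)^2 := by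
            have e2a : (FK (h' • t) - FK (h • t))^2 * ‖φ t‖ ^ 2
                ≤ (FK (h' • t) - FK (h • t))^2 :=
              mul_le_of_le_one_right (sq_nonneg _) h2
            nlinarith
          nlinarith
        have hgsh : Integrable (fun t : EuclideanSpace ℝ (Fin d) =>
            (1 / (n:ℝ)) * ((1 - ‖φ t‖ ^ 2) * (FK (h • t)) ^ 2)) :=
          hghint.const_mul (1/(n:ℝ))
        have hintf : Integrable (fun t : EuclideanSpace ℝ (Fin d) =>
            (1 - FK (h • t)) ^ 2 * ‖φ t‖ ^ 2
              + (1 / (n : ℝ)) * (1 - ‖φ t‖ ^ 2) * (FK (h • t)) ^ 2) :=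
          (hinta.add hgsh).congr
            (Filter.Eventually.of_forall fun t => by
              simp only [Pi.add_apply]
              ring)
        rw [show (1 / (n:ℝ)) * (∫ t, (1 - ‖φ t‖ ^ 2) * (FK (h' • t)) ^ 2)
            = ∫ t, (1 / (n:ℝ)) * ((1 - ‖φ t‖ ^ 2) * (FK (h' • t)) ^ 2) from
          (integral_const_mul (1/(n:ℝ)) (fun t : EuclideanSpace ℝ (Fin d) =>
            (1 - ‖φ t‖ ^ 2) * (FK (h' • t)) ^ 2)).symm,
          ← integral_sub hintf' hgs']
        refine integral_mono (hintf'.sub hgs') hintf fun t => ?_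
        simp only [Pi.sub_apply]
        have e0 : (1 - FK (h' • t)) ^ 2 * ‖φ t‖ ^ 2
              + (1 / (n : ℝ)) * (1 - ‖φ t‖ ^ 2) * (FK (h' • t)) ^ 2
              - (1 / (n:ℝ)) * ((1 - ‖φ t‖ ^ 2) * (FK (h' • t)) ^ 2)
            = (1 - FK (h' • t)) ^ 2 * ‖φ t‖ ^ 2 := by ring
        rw [e0]
        have e1 : (1 - FK (h' • t)) ^ 2 * ‖φ t‖ ^ 2
            ≤ (1 - FK (h • t)) ^ 2 * ‖φ t‖ ^ 2 := by
          refine mul_le_mul_of_nonneg_right ?_ (hP01 t).1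
          refine pow_le_pow_left₀ (by linarith [(hFK01 (h' • t)).2]) (by linarith [hFKmono t]) 2
        have e2 : 0 ≤ (1 / (n : ℝ)) * (1 - ‖φ t‖ ^ 2) * (FK (h • t)) ^ 2 :=
          mul_nonneg (mul_nonneg (by positivity) (by linarith [(hP01 t).2])) (sq_nonneg _)
        linarith
      · -- non-integrable case : both R-integrals vanish
        have hload : ¬ Integrable (fun t : EuclideanSpace ℝ (Fin d) =>
            (1 - FK (h' • t)) ^ 2 * ‖φ t‖ ^ 2
              + (1 / (n : ℝ)) * (1 - ‖φ t‖ ^ 2) * (FK (h' • t)) ^ 2) := by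
          intro hcon
          apply hint'
          have hgs' : Integrable (fun t : EuclideanSpace ℝ (Fin d) =>
              (1 / (n : ℝ)) * (1 - ‖φ t‖ ^ 2) * (FK (h' • t)) ^ 2) :=
            (hgint.const_mul (1/(n:ℝ))).congr
              (Filter.Eventually.of_forall fun t => by ring)
          have hs := hcon.sub hgs'
          exact hs.congr (Filter.Eventually.of_forall fun t => by
            simp only [Pi.sub_apply]
            ring)
        have hloada : ¬ Integrable (fun t : EuclideanSpace ℝ (Fin d) =>
            (1 - FK (h • t)) ^ 2 * ‖φ t‖ ^ 2) := by
          intro hcon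
          apply hint'
          refine Integrable.mono' hcon
            (((measurable_const.sub (hFKm.comp (measurable_const_smul h'))).pow_const 2).mul
              hPm).aestronglyMeasurable (Filter.Eventually.of_forall fun t => ?_)
          rw [Real.norm_of_nonneg (mul_nonneg (sq_nonneg _) (sq_nonneg _))]
          refine mul_le_mul_of_nonneg_right ?_ (hP01 t).1
          refine pow_le_pow_left₀ (by linarith [(hFK01 (h' • t)).2]) (by linarith [hFKmono t]) 2
        have hloadf : ¬ Integrable (fun t : EuclideanSpace ℝ (Fin d) =>
            (1 - FK (h • t)) ^ 2 * ‖φ t‖ ^ 2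
              + (1 / (n : ℝ)) * (1 - ‖φ t‖ ^ 2) * (FK (h • t)) ^ 2) := by
          intro hcon
          apply hloada
          have hgsh : Integrable (fun t : EuclideanSpace ℝ (Fin d) =>
              (1 / (n : ℝ)) * (1 - ‖φ t‖ ^ 2) * (FK (h • t)) ^ 2) :=
            (hghint.const_mul (1/(n:ℝ))).congr
              (Filter.Eventually.of_forall fun t => by ring)
          have hs := hcon.sub hgsh
          exact hs.congr (Filter.Eventually.of_forall fun t => by
            simp only [Pi.sub_apply]
            ring)
        rw [integral_undef hload, integral_undef hloadf]
        have : 0 ≤ (1/(n:ℝ)) * (∫ t, (1 - ‖φ t‖ ^ 2) * (FK (h' • t)) ^ 2) :=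
          mul_nonneg (by positivity) hgJnn
        linarith
    calc (1 / (2 * π) ^ d) * (∫ t, ((1 - FK (h' • t)) ^ 2 * ‖φ t‖ ^ 2
            + (1 / (n : ℝ)) * (1 - ‖φ t‖ ^ 2) * (FK (h' • t)) ^ 2))
          - (1 / ((n : ℝ) * (2 * π) ^ d)) *
            (∫ t, (1 - ‖φ t‖ ^ 2) * (FK (h' • t)) ^ 2)
        = (1 / (2 * π) ^ d) * ((∫ t, ((1 - FK (h' • t)) ^ 2 * ‖φ t‖ ^ 2
            + (1 / (n : ℝ)) * (1 - ‖φ t‖ ^ 2) * (FK (h' • t)) ^ 2))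
          - (1 / (n:ℝ)) * (∫ t, (1 - ‖φ t‖ ^ 2) * (FK (h' • t)) ^ 2)) := by
          rw [mul_sub, ← mul_assoc, one_div_mul_one_div, mul_comm ((2 * π) ^ d) (n:ℝ)]
      _ ≤ (1 / (2 * π) ^ d) * ∫ t, ((1 - FK (h • t)) ^ 2 * ‖φ t‖ ^ 2
            + (1 / (n : ℝ)) * (1 - ‖φ t‖ ^ 2) * (FK (h • t)) ^ 2) :=
          mul_le_mul_of_nonneg_left hsuff (by positivity)
  · -- second inequality
    rw [ge_iff_le, sub_le_sub_iff_left]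
    have hJq : (∫ t, (1 - ‖φ t‖ ^ 2) * (FK (h' • t)) ^ 2)
        ≤ ∫ t, FK (h' • t) ^ 2 := integral_mono hgint hq'int hgle
    have hn0 : (n:ℝ) ≠ 0 := ne_of_gt hn'
    have hh0 : h' ≠ 0 := ne_of_gt hh'
    calc (1 / ((n : ℝ) * (2 * π) ^ d)) *
          (∫ t, (1 - ‖φ t‖ ^ 2) * (FK (h' • t)) ^ 2)
        ≤ (1 / ((n : ℝ) * (2 * π) ^ d)) * ((2 * π / h') ^ d * ∫ x, K x ^ 2) :=
          mul_le_mul_of_nonneg_left (hJq.trans hq'bd) (by positivity)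
      _ = (∫ x, (K x) ^ 2) / ((n:ℝ) * h' ^ (d : ℝ)) := by
          rw [hrpow, div_pow]
          field_simp
end
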